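/- arXiv:2506.10455 — 4 statements merged into one kernel-verified Lean document; each statement's English description precedes it below -/
import Mathlib

section
/- Let X be a continuum (a compact connected metric space with more than one point), let n ≥ 2 be an integer, and let f : X → X be a continuous map. If SF_n(f) is sensitive, then F_n(f) is sensitive (with the same sensitivity constant); and if F_n(f) is sensitive, then f is sensitive (with the same sensitivity constant). -/
open Metric Set TopologicalSpace

variable (X : Type*) [MetricSpace X] (n : ℕ)

/-- The `n`-fold symmetric product `F_n(X)`: nonempty subsets of `X` with at most `n`
points, as a subspace of the nonempty compact subsets of `X` with the Hausdorff metric. -/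
abbrev Fn := {A : NonemptyCompacts X // (A : Set X).Finite ∧ (A : Set X).ncard ≤ n}

/-- The induced map `F_n(f)` on the `n`-fold symmetric product, `A ↦ f(A)`. -/
noncomputable def FnMap (f : X → X) : Fn X n → Fn X n := fun A =>
  ⟨⟨⟨f '' (A.1 : Set X), (A.2.1.image f).isCompact⟩, A.1.nonempty.image f⟩,
    A.2.1.image f, le_trans (Set.ncard_image_le A.2.1) A.2.2⟩

/-- `F_1(X) ⊆ F_n(X)`: the set of singletons. -/
def F1 : Set (Fn X n) := {A | ∃ x : X, (A.1 : Set X) = {x}}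

/-- The setoid collapsing `F_1(X)` to a point. -/
def SFnSetoid : Setoid (Fn X n) where
  r A B := A = B ∨ (A ∈ F1 X n ∧ B ∈ F1 X n)
  iseqv := by
    refine ⟨fun _ => Or.inl rfl, fun h => h.imp Eq.symm And.symm, fun h₁ h₂ => ?_⟩
    rcases h₁ with rfl | h₁
    · exact h₂
    · rcases h₂ with rfl | h₂
      · exact Or.inr h₁
      · exact Or.inr ⟨h₁.1, h₂.2⟩

/-- The `n`-fold symmetric product suspension `SF_n(X) = F_n(X)/F_1(X)`,
with the quotient topology. -/
abbrev SFn := Quotient (SFnSetoid X n)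

/-- The quotient map `q : F_n(X) → SF_n(X)`. -/
def SFnQ : Fn X n → SFn X n := Quotient.mk (SFnSetoid X n)

/-- The induced map `SF_n(f)` on the suspension, with `SF_n(f) ∘ q = q ∘ F_n(f)`. -/
noncomputable def SFnMap (f : X → X) : SFn X n → SFn X n :=
  Quotient.lift (fun A => SFnQ X n (FnMap X n f A))
    (fun A B h => Quotient.sound (by
      rcases h with rfl | ⟨⟨x, hx⟩, ⟨y, hy⟩⟩
      · exact Or.inl rfl
      · exact Or.inr ⟨⟨f x, by simp [FnMap, hx]⟩, ⟨f y, by simp [FnMap, hy]⟩⟩))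

/-- The metric `ρ` on `SF_n(X)`:
`ρ(χ₁,χ₂) = H(F_1(X) ∪ q⁻¹(χ₁), F_1(X) ∪ q⁻¹(χ₂))` where `H` is the Hausdorff
distance between subsets of `F_n(X)`. -/
noncomputable def SFnDist : SFn X n → SFn X n → ℝ := fun a b =>
  Metric.hausdorffDist (F1 X n ∪ SFnQ X n ⁻¹' {a}) (F1 X n ∪ SFnQ X n ⁻¹' {b})

/-- `g` is sensitive with sensitivity constant `δ` (w.r.t. a distance function `d` and
the topology of `Z`): every nonempty open set contains two points whose iterates
separate by more than `δ`. -/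
def SensitiveWith {Z : Type*} [TopologicalSpace Z] (d : Z → Z → ℝ) (g : Z → Z) (δ : ℝ) : Prop :=
  ∀ U : Set Z, IsOpen U → U.Nonempty →
    ∃ x ∈ U, ∃ y ∈ U, ∃ k : ℕ, 0 < k ∧ δ < d (g^[k] x) (g^[k] y)

section Aux

variable {X n}

/-- Underlying set of `FnMap` iterate. -/
lemma fnMap_iterate_coe (f : X → X) : ∀ (k : ℕ) (A : Fn X n),
    (((FnMap X n f)^[k] A).1 : Set X) = f^[k] '' (A.1 : Set X)
  | 0, A => by simp
  | (k+1), A => by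
    rw [Function.iterate_succ_apply']
    show f '' (((FnMap X n f)^[k] A).1 : Set X) = _
    rw [fnMap_iterate_coe f k A, ← Set.image_comp, ← Function.iterate_succ']

lemma fn_dist_eq (A B : Fn X n) :
    dist A B = Metric.hausdorffDist (A.1 : Set X) (B.1 : Set X) := by
  rw [Subtype.dist_eq, NonemptyCompacts.dist_eq]

lemma fn_edist_ne_top (A B : Fn X n) :
    EMetric.hausdorffEdist (A.1 : Set X) (B.1 : Set X) ≠ ⊤ :=
  Metric.hausdorffEdist_ne_top_of_nonempty_of_bounded A.1.nonempty B.1.nonempty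
    A.1.isCompact.isBounded B.1.isCompact.isBounded

lemma sfnMap_iterate (f : X → X) : ∀ (k : ℕ) (A : Fn X n),
    (SFnMap X n f)^[k] (SFnQ X n A) = SFnQ X n ((FnMap X n f)^[k] A)
  | 0, A => rfl
  | (k+1), A => by
    rw [Function.iterate_succ_apply]
    show (SFnMap X n f)^[k] (SFnQ X n (FnMap X n f A)) = _
    rw [sfnMap_iterate f k, Function.iterate_succ_apply]

lemma preimage_union_eq (A : Fn X n) :
    F1 X n ∪ SFnQ X n ⁻¹' {SFnQ X n A} = F1 X n ∪ {A} := by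
  ext B
  simp only [Set.mem_union, Set.mem_preimage, Set.mem_singleton_iff]
  constructor
  · rintro (h | h)
    · exact Or.inl h
    · rcases Quotient.eq.mp h with rfl | ⟨hB, _⟩
      · exact Or.inr rfl
      · exact Or.inl hB
  · rintro (h | rfl)
    · exact Or.inl h
    · exact Or.inr rfl

lemma sfnDist_le (A B : Fn X n) : SFnDist X n (SFnQ X n A) (SFnQ X n B) ≤ dist A B := by
  unfold SFnDist
  rw [preimage_union_eq, preimage_union_eq]
  apply Metric.hausdorffDist_le_of_mem_dist dist_nonneg
  · rintro C (hC | rfl)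
    · exact ⟨C, Or.inl hC, by simpa using dist_nonneg⟩
    · exact ⟨B, Or.inr rfl, le_of_eq rfl⟩
  · rintro C (hC | rfl)
    · exact ⟨C, Or.inl hC, by simpa using dist_nonneg⟩
    · exact ⟨A, Or.inr rfl, le_of_eq (dist_comm _ _)⟩

/-- In a connected space with more than one point, every ball contains a second point. -/
lemma exists_ne_dist_lt [ConnectedSpace X] [Nontrivial X] (a : X) {ε : ℝ} (hε : 0 < ε) :
    ∃ y : X, y ≠ a ∧ dist a y < ε := by
  by_contra h
  push_neg at h
  have hball : Metric.ball a ε = {a} := by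
    apply Set.Subset.antisymm
    · intro y hy
      by_contra hne
      exact absurd (Metric.mem_ball'.mp hy) (not_lt.2 (h y hne))
    · intro y hy
      simp only [Set.mem_singleton_iff] at hy
      subst hy; exact Metric.mem_ball_self hε
  have hclopen : IsClopen ({a} : Set X) := ⟨isClosed_singleton, hball ▸ Metric.isOpen_ball⟩
  obtain ⟨b, hb⟩ := exists_ne a
  have : b ∈ ({a} : Set X) := (hclopen.eq_univ ⟨a, rfl⟩) ▸ Set.mem_univ b
  exact hb this

end Aux

theorem stmt0 (X : Type*) [MetricSpace X] [CompactSpace X] [ConnectedSpace X] [Nontrivial X]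
    (n : ℕ) (hn : 2 ≤ n) (f : X → X) (hf : Continuous f) (δ : ℝ) (hδ : 0 < δ) :
    (SensitiveWith (SFnDist X n) (SFnMap X n f) δ → SensitiveWith dist (FnMap X n f) δ) ∧
    (SensitiveWith dist (FnMap X n f) δ → SensitiveWith (dist : X → X → ℝ) f δ) := by
  constructor
  · -- SF_n(f) sensitive → F_n(f) sensitive
    intro hs U hU hUne
    obtain ⟨A₀, hA₀⟩ := hUne
    obtain ⟨ε, hε, hball⟩ := Metric.isOpen_iff.mp hU A₀ hA₀
    -- find a non-singleton B close to A₀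
    obtain ⟨B, hBd, a, b, ha, hb, hab⟩ : ∃ B : Fn X n, dist B A₀ < ε ∧
        ∃ a b : X, a ∈ (B.1 : Set X) ∧ b ∈ (B.1 : Set X) ∧ a ≠ b := by
      by_cases hsing : ∃ x y : X, x ∈ (A₀.1 : Set X) ∧ y ∈ (A₀.1 : Set X) ∧ x ≠ y
      · obtain ⟨x, y, hx, hy, hxy⟩ := hsing
        exact ⟨A₀, by simpa using hε, x, y, hx, hy, hxy⟩
      · push_neg at hsing
        obtain ⟨a, ha⟩ := A₀.1.nonempty
        obtain ⟨y, hya, hyd⟩ := exists_ne_dist_lt a hε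
        have hfinay : ({a, y} : Set X).Finite := (Set.finite_singleton y).insert a
        refine ⟨⟨⟨⟨{a, y}, hfinay.isCompact⟩, ⟨a, by simp⟩⟩,
            hfinay, by
              show ({a, y} : Set X).ncard ≤ n
              rw [Set.ncard_pair hya.symm]; exact hn⟩, ?_,
            a, y, by show a ∈ ({a, y} : Set X); simp, by show y ∈ ({a, y} : Set X); simp, hya.symm⟩
        rw [fn_dist_eq]
        have hle : hausdorffDist ({a, y} : Set X) (A₀.1 : Set X) ≤ dist a y := by
          apply hausdorffDist_le_of_mem_dist dist_nonneg
          · intro x hx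
            refine ⟨a, ha, ?_⟩
            rcases hx with rfl | hx
            · simpa using dist_nonneg
            · simp only [Set.mem_singleton_iff] at hx
              subst hx
              exact le_of_eq (dist_comm x a)
          · intro x hx
            refine ⟨a, by simp, ?_⟩
            rw [hsing x a hx ha]
            simpa using dist_nonneg
        exact lt_of_le_of_lt hle hyd
    -- the open set V = ball B r avoids F1 and lies in U
    have hab' : (0:ℝ) < dist a b := dist_pos.mpr hab
    set r : ℝ := min (ε - dist B A₀) (dist a b / 3) with hr_def
    have hr : 0 < r := lt_min (by linarith) (by linarith)
    have hVU : Metric.ball B r ⊆ U := by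
      intro C hC
      apply hball
      rw [Metric.mem_ball] at hC ⊢
      have h1 : dist C A₀ ≤ dist C B + dist B A₀ := dist_triangle _ _ _
      have h2 : r ≤ ε - dist B A₀ := min_le_left _ _
      linarith
    have hVF1 : ∀ C ∈ Metric.ball B r, C ∉ F1 X n := by
      rintro C hC ⟨x, hx⟩
      rw [Metric.mem_ball, fn_dist_eq, hx] at hC
      have hfin := fn_edist_ne_top B C
      rw [hx] at hfin
      have h1 : dist a x ≤ hausdorffDist (B.1 : Set X) ({x} : Set X) := by
        have := infDist_le_hausdorffDist_of_mem ha hfin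
        rwa [infDist_singleton] at this
      have h2 : dist b x ≤ hausdorffDist (B.1 : Set X) ({x} : Set X) := by
        have := infDist_le_hausdorffDist_of_mem hb hfin
        rwa [infDist_singleton] at this
      have h3 : hausdorffDist (B.1 : Set X) ({x} : Set X) < dist a b / 3 := by
        rw [hausdorffDist_comm]
        exact lt_of_lt_of_le hC (min_le_right _ _)
      have h4 : dist a b ≤ dist a x + dist b x := by
        rw [dist_comm b x]; exact dist_triangle a x b
      linarith
    -- the image of V in the suspension is open
    have hq : Topology.IsQuotientMap (SFnQ X n) := isQuotientMap_quotient_mk'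
    have hpre : SFnQ X n ⁻¹' (SFnQ X n '' Metric.ball B r) = Metric.ball B r := by
      ext C
      simp only [Set.mem_preimage, Set.mem_image]
      constructor
      · rintro ⟨D, hD, hDC⟩
        rcases Quotient.eq.mp hDC with rfl | ⟨hD1, hC1⟩
        · exact hD
        · exact absurd hD1 (hVF1 D hD)
      · intro hC; exact ⟨C, hC, rfl⟩
    have hWopen : IsOpen (SFnQ X n '' Metric.ball B r) := by
      rw [← hq.isOpen_preimage, hpre]; exact Metric.isOpen_ball
    obtain ⟨χ₁, hχ₁, χ₂, hχ₂, k, hk, hd⟩ := hs _ hWopen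
      ⟨SFnQ X n B, B, Metric.mem_ball_self hr, rfl⟩
    obtain ⟨A₁, hA₁, rfl⟩ := hχ₁
    obtain ⟨A₂, hA₂, rfl⟩ := hχ₂
    rw [sfnMap_iterate, sfnMap_iterate] at hd
    exact ⟨A₁, hVU hA₁, A₂, hVU hA₂, k, hk, lt_of_lt_of_le hd (sfnDist_le _ _)⟩
  · -- F_n(f) sensitive → f sensitive
    intro hs U hU hUne
    obtain ⟨x₀, hx₀⟩ := hUne
    obtain ⟨ε, hε, hball⟩ := Metric.isOpen_iff.mp hU x₀ hx₀
    set S : Fn X n := ⟨⟨⟨{x₀}, isCompact_singleton⟩, ⟨x₀, rfl⟩⟩, Set.finite_singleton _, by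
      show ({x₀} : Set X).ncard ≤ n
      rw [Set.ncard_singleton]; omega⟩ with hS_def
    have hS : (S.1 : Set X) = {x₀} := rfl
    have hsub : ∀ C : Fn X n, C ∈ Metric.ball S ε → (C.1 : Set X) ⊆ U := by
      intro C hC c hc
      apply hball
      rw [Metric.mem_ball, fn_dist_eq] at hC
      have h1 : infDist c (S.1 : Set X) ≤ hausdorffDist (C.1 : Set X) (S.1 : Set X) :=
        infDist_le_hausdorffDist_of_mem hc (fn_edist_ne_top C S)
      rw [hS, infDist_singleton] at h1
      exact Metric.mem_ball.mpr (lt_of_le_of_lt h1 hC)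
    obtain ⟨A, hA, B, hB, k, hk, hd⟩ := hs (Metric.ball S ε) Metric.isOpen_ball
      ⟨S, Metric.mem_ball_self hε⟩
    rw [fn_dist_eq, fnMap_iterate_coe, fnMap_iterate_coe] at hd
    have hcase : (∃ p ∈ f^[k] '' (A.1 : Set X), ∀ q ∈ f^[k] '' (B.1 : Set X), δ < dist p q) ∨
        (∃ p ∈ f^[k] '' (B.1 : Set X), ∀ q ∈ f^[k] '' (A.1 : Set X), δ < dist p q) := by
      by_contra h
      push_neg at h
      exact absurd (hausdorffDist_le_of_mem_dist hδ.le h.1 h.2) (not_le.2 hd)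
    rcases hcase with ⟨p, hp, hall⟩ | ⟨p, hp, hall⟩
    · obtain ⟨xa, hxa, rfl⟩ := hp
      obtain ⟨yb, hyb⟩ := B.1.nonempty
      exact ⟨xa, hsub A hA hxa, yb, hsub B hB hyb, k, hk,
        hall _ ⟨yb, hyb, rfl⟩⟩
    · obtain ⟨xb, hxb, rfl⟩ := hp
      obtain ⟨ya, hya⟩ := A.1.nonempty
      exact ⟨xb, hsub B hB hxb, ya, hsub A hA hya, k, hk,
        hall _ ⟨ya, hya, rfl⟩⟩
end

section
/- Let X be a continuum (a compact connected metric space with more than one point), let n ≥ 2 be an integer, and let f : X → X be a continuous map. Then f is multi-sensitive if and only if F_n(f) is multi-sensitive; moreover, if SF_n(f) is multi-sensitive, then F_n(f) is multi-sensitive. -/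
open Metric Set TopologicalSpace

variable (X : Type*) [MetricSpace X] (n : ℕ)

/-- `g` is multi-sensitive (w.r.t. a distance function `d` and the topology of `Z`). -/
def MultiSensitive {Z : Type*} [TopologicalSpace Z] (d : Z → Z → ℝ) (g : Z → Z) : Prop :=
  ∃ δ : ℝ, 0 < δ ∧ ∀ m : ℕ, 0 < m → ∀ U : Fin m → Set Z,
    (∀ i, IsOpen (U i)) → (∀ i, (U i).Nonempty) →
    ∃ k : ℕ, 0 < k ∧ ∀ i, ∃ x ∈ U i, ∃ y ∈ U i, δ < d (g^[k] x) (g^[k] y)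

section Helpers

variable {Y : Type*} [MetricSpace Y] {N : ℕ}

lemma Fn.dist_eq' (A B : Fn Y N) :
    dist A B = hausdorffDist (A.1 : Set Y) (B.1 : Set Y) := rfl

/-- Constructor for elements of `Fn`. -/
noncomputable def mkFn (s : Set Y) (hfin : s.Finite) (hne : s.Nonempty)
    (hcard : s.ncard ≤ N) : Fn Y N :=
  ⟨⟨⟨s, hfin.isCompact⟩, hne⟩, hfin, hcard⟩

@[simp] lemma mkFn_coe (s : Set Y) (hfin : s.Finite) (hne : s.Nonempty)
    (hcard : s.ncard ≤ N) : ((mkFn s hfin hne hcard).1 : Set Y) = s := rfl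

lemma FnMap_iterate_coe (f : Y → Y) (k : ℕ) (A : Fn Y N) :
    (((FnMap Y N f)^[k] A).1 : Set Y) = f^[k] '' (A.1 : Set Y) := by
  induction k with
  | zero => simp
  | succ k ih =>
      rw [Function.iterate_succ_apply']
      show f '' (((FnMap Y N f)^[k] A).1 : Set Y) = _
      rw [ih, Function.iterate_succ', Function.comp_def, Set.image_image]

lemma hEd_ne_top {s t : Set Y} (hs : s.Nonempty) (ht : t.Nonempty)
    (hsc : IsCompact s) (htc : IsCompact t) :
    EMetric.hausdorffEdist s t ≠ ⊤ :=
  Metric.hausdorffEdist_ne_top_of_nonempty_of_bounded hs ht hsc.isBounded htc.isBounded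

lemma multiSensitive_fintype {Z : Type*} [TopologicalSpace Z] {d : Z → Z → ℝ} {g : Z → Z}
    {δ : ℝ}
    (h : ∀ m : ℕ, 0 < m → ∀ U : Fin m → Set Z, (∀ i, IsOpen (U i)) →
      (∀ i, (U i).Nonempty) →
      ∃ k : ℕ, 0 < k ∧ ∀ i, ∃ x ∈ U i, ∃ y ∈ U i, δ < d (g^[k] x) (g^[k] y))
    (ι : Type*) [Fintype ι] [Nonempty ι] (U : ι → Set Z)
    (ho : ∀ i, IsOpen (U i)) (hne : ∀ i, (U i).Nonempty) :
    ∃ k : ℕ, 0 < k ∧ ∀ i, ∃ x ∈ U i, ∃ y ∈ U i, δ < d (g^[k] x) (g^[k] y) := by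
  obtain ⟨k, hk, H⟩ := h (Fintype.card ι) Fintype.card_pos
    (U ∘ (Fintype.equivFin ι).symm) (fun i => ho _) (fun i => hne _)
  exact ⟨k, hk, fun i => by simpa using H ((Fintype.equivFin ι) i)⟩

lemma f_of_Fn {f : Y → Y} (hn : 1 ≤ N)
    (h : MultiSensitive dist (FnMap Y N f)) :
    MultiSensitive (dist : Y → Y → ℝ) f := by
  obtain ⟨δ, hδ, H⟩ := h
  refine ⟨δ, hδ, ?_⟩
  intro m hm U hUo hUne
  have hsel : ∀ i, ∃ x : Y, ∃ r : ℝ, 0 < r ∧ x ∈ U i ∧ ball x r ⊆ U i := by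
    intro i
    obtain ⟨x, hx⟩ := hUne i
    obtain ⟨r, hr, hball⟩ := Metric.isOpen_iff.1 (hUo i) x hx
    exact ⟨x, r, hr, hx, hball⟩
  choose x r hr hxU hball using hsel
  have hcard : ∀ i : Fin m, ({x i} : Set Y).ncard ≤ N := by
    intro i; rw [Set.ncard_singleton]; exact hn
  set S : Fin m → Fn Y N := fun i =>
    mkFn {x i} (Set.finite_singleton _) (Set.singleton_nonempty _) (hcard i) with hS
  obtain ⟨k, hk, HH⟩ := H m hm (fun i => ball (S i) (r i))
    (fun i => isOpen_ball) (fun i => ⟨S i, mem_ball_self (hr i)⟩)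
  refine ⟨k, hk, ?_⟩
  intro i
  obtain ⟨A, hA, B, hB, hd⟩ := HH i
  rw [Fn.dist_eq', FnMap_iterate_coe, FnMap_iterate_coe] at hd
  -- extract far points
  have key : ∃ a ∈ (A.1 : Set Y), ∃ b ∈ (B.1 : Set Y), δ < dist (f^[k] a) (f^[k] b) := by
    by_contra hcon
    push_neg at hcon
    have h1 : ∀ u ∈ f^[k] '' (A.1 : Set Y), infDist u (f^[k] '' (B.1 : Set Y)) ≤ δ := by
      rintro u ⟨a, ha, rfl⟩
      obtain ⟨b, hb⟩ := B.1.nonempty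
      exact le_trans (infDist_le_dist_of_mem (Set.mem_image_of_mem _ hb)) (hcon a ha b hb)
    have h2 : ∀ u ∈ f^[k] '' (B.1 : Set Y), infDist u (f^[k] '' (A.1 : Set Y)) ≤ δ := by
      rintro u ⟨b, hb, rfl⟩
      obtain ⟨a, ha⟩ := A.1.nonempty
      refine le_trans (infDist_le_dist_of_mem (Set.mem_image_of_mem _ ha)) ?_
      rw [dist_comm]; exact hcon a ha b hb
    exact absurd (hausdorffDist_le_of_infDist hδ.le h1 h2) (not_le.2 hd)
  obtain ⟨a, ha, b, hb, hab⟩ := key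
  -- a, b lie in U i
  have hmem : ∀ (C : Fn Y N), C ∈ ball (S i) (r i) → ∀ c ∈ (C.1 : Set Y), c ∈ U i := by
    intro C hC c hc
    have hfin : EMetric.hausdorffEdist (C.1 : Set Y) ({x i} : Set Y) ≠ ⊤ :=
      hEd_ne_top C.1.nonempty (Set.singleton_nonempty _) C.1.isCompact isCompact_singleton
    have h1 : infDist c ({x i} : Set Y) ≤ hausdorffDist (C.1 : Set Y) ({x i} : Set Y) :=
      infDist_le_hausdorffDist_of_mem hc hfin
    have h2 : hausdorffDist (C.1 : Set Y) ({x i} : Set Y) < r i := by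
      rw [mem_ball, Fn.dist_eq'] at hC; exact hC
    rw [Metric.infDist_singleton] at h1
    exact hball i (mem_ball.2 (lt_of_le_of_lt h1 h2))
  exact ⟨a, hmem A hA a ha, b, hmem B hB b hb, hab⟩

lemma Fn_of_f {f : Y → Y} (h : MultiSensitive (dist : Y → Y → ℝ) f) :
    MultiSensitive dist (FnMap Y N f) := by
  obtain ⟨δ, hδ, H⟩ := h
  refine ⟨δ / 2, by positivity, ?_⟩
  intro m hm U hUo hUne
  have hsel : ∀ i, ∃ A : Fn Y N, ∃ ε : ℝ, 0 < ε ∧ ball A ε ⊆ U i := by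
    intro i
    obtain ⟨A, hA⟩ := hUne i
    obtain ⟨ε, hε, hball⟩ := Metric.isOpen_iff.1 (hUo i) A hA
    exact ⟨A, ε, hε, hball⟩
  choose A ε hε hball using hsel
  set ι := (i : Fin m) × {a : Y // a ∈ (A i).2.1.toFinset} with hι
  haveI : Nonempty ι := by
    refine ⟨⟨⟨0, hm⟩, ⟨((A ⟨0, hm⟩).1).nonempty.choose, ?_⟩⟩⟩
    rw [Set.Finite.mem_toFinset]
    exact ((A ⟨0, hm⟩).1).nonempty.choose_spec
  obtain ⟨k, hk, HH⟩ := multiSensitive_fintype H ι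
    (fun pr => ball (pr.2 : Y) (ε pr.1 / 2)) (fun _ => isOpen_ball)
    (fun pr => ⟨pr.2, mem_ball_self (by have := hε pr.1; positivity)⟩)
  refine ⟨k, hk, ?_⟩
  intro i
  have hsfin : ((A i).1 : Set Y).Finite := (A i).2.1
  have hsne : ((A i).1 : Set Y).Nonempty := (A i).1.nonempty
  have Hpts : ∀ a ∈ ((A i).1 : Set Y), ∃ x, x ∈ ball a (ε i / 2) ∧ ∃ y,
      y ∈ ball a (ε i / 2) ∧ δ < dist (f^[k] x) (f^[k] y) := by
    intro a ha
    obtain ⟨u, hu, v, hv, hd⟩ := HH ⟨i, ⟨a, hsfin.mem_toFinset.2 ha⟩⟩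
    exact ⟨u, hu, v, hv, hd⟩
  choose! x hx y hy hd using Hpts
  obtain ⟨a₀, ha₀⟩ := hsne
  set p := f^[k] (x a₀) with hp
  set c : Y → Y := fun a => if δ / 2 < dist (f^[k] (y a)) p then y a else x a with hc
  have hc_mem : ∀ a ∈ ((A i).1 : Set Y), c a ∈ ball a (ε i / 2) := by
    intro a ha
    by_cases hcase : δ / 2 < dist (f^[k] (y a)) p
    · simpa only [hc, if_pos hcase] using hy a ha
    · simpa only [hc, if_neg hcase] using hx a ha
  have hc_far : ∀ a ∈ ((A i).1 : Set Y), δ / 2 < dist (f^[k] (c a)) p := by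
    intro a ha
    by_cases hcase : δ / 2 < dist (f^[k] (y a)) p
    · simpa only [hc, if_pos hcase] using hcase
    · simp only [hc, if_neg hcase]
      push_neg at hcase
      have h1 := hd a ha
      have h2 := dist_triangle (f^[k] (x a)) p (f^[k] (y a))
      have h3 : dist p (f^[k] (y a)) = dist (f^[k] (y a)) p := dist_comm _ _
      linarith
  -- The two sets
  set D0 : Set Y := c '' ((A i).1 : Set Y) with hD0
  set C0 : Set Y := insert (x a₀) (c '' (((A i).1 : Set Y) \ {a₀})) with hC0
  have hD0fin : D0.Finite := hsfin.image c
  have hD0ne : D0.Nonempty := ⟨c a₀, Set.mem_image_of_mem c ha₀⟩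
  have hD0card : D0.ncard ≤ N := (Set.ncard_image_le hsfin).trans (A i).2.2
  have hC0fin : C0.Finite := ((hsfin.diff).image c).insert _
  have hC0ne : C0.Nonempty := ⟨x a₀, Set.mem_insert _ _⟩
  have hC0card : C0.ncard ≤ N := by
    have h1 : C0.ncard ≤ (c '' (((A i).1 : Set Y) \ {a₀})).ncard + 1 :=
      Set.ncard_insert_le _ _
    have h2 : (c '' (((A i).1 : Set Y) \ {a₀})).ncard ≤ (((A i).1 : Set Y) \ {a₀}).ncard :=
      Set.ncard_image_le (hsfin.diff)
    have h3 : (((A i).1 : Set Y) \ {a₀}).ncard = ((A i).1 : Set Y).ncard - 1 :=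
      Set.ncard_diff_singleton_of_mem ha₀
    have h4 : 0 < ((A i).1 : Set Y).ncard := Set.ncard_pos hsfin |>.2 ⟨a₀, ha₀⟩
    have h5 := (A i).2.2
    omega
  set CA : Fn Y N := mkFn C0 hC0fin hC0ne hC0card with hCA
  set DA : Fn Y N := mkFn D0 hD0fin hD0ne hD0card with hDA
  -- membership in U i
  have hCmem : CA ∈ U i := by
    apply hball i
    rw [mem_ball, Fn.dist_eq', mkFn_coe]
    refine lt_of_le_of_lt (hausdorffDist_le_of_infDist (half_pos (hε i)).le
      ?_ ?_) (half_lt_self (hε i))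
    · rintro u hu
      rcases hu with rfl | ⟨a, ⟨ha, _⟩, rfl⟩
      · exact (infDist_le_dist_of_mem ha₀).trans (mem_ball.1 (hx a₀ ha₀)).le
      · exact (infDist_le_dist_of_mem ha).trans (mem_ball.1 (hc_mem a ha)).le
    · intro a ha
      by_cases hcase : a = a₀
      · subst hcase
        refine (infDist_le_dist_of_mem (Set.mem_insert _ _)).trans ?_
        rw [dist_comm]; exact (mem_ball.1 (hx a ha)).le
      · refine (infDist_le_dist_of_mem
          (Set.mem_insert_of_mem _ (Set.mem_image_of_mem c (show a ∈ ((A i).1 : Set Y) \ {a₀} from ⟨ha, hcase⟩)))).trans ?_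
        rw [dist_comm]; exact (mem_ball.1 (hc_mem a ha)).le
  have hDmem : DA ∈ U i := by
    apply hball i
    rw [mem_ball, Fn.dist_eq', mkFn_coe]
    refine lt_of_le_of_lt (hausdorffDist_le_of_infDist (half_pos (hε i)).le
      ?_ ?_) (half_lt_self (hε i))
    · rintro u ⟨a, ha, rfl⟩
      exact (infDist_le_dist_of_mem ha).trans (mem_ball.1 (hc_mem a ha)).le
    · intro a ha
      refine (infDist_le_dist_of_mem (Set.mem_image_of_mem c ha)).trans ?_
      rw [dist_comm]; exact (mem_ball.1 (hc_mem a ha)).le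
  -- the distance estimate
  refine ⟨CA, hCmem, DA, hDmem, ?_⟩
  rw [Fn.dist_eq', FnMap_iterate_coe, FnMap_iterate_coe, mkFn_coe, mkFn_coe]
  have hpmem : p ∈ f^[k] '' C0 := Set.mem_image_of_mem _ (Set.mem_insert _ _)
  have hfinD : (f^[k] '' D0).Finite := hD0fin.image _
  have hfinC : (f^[k] '' C0).Finite := hC0fin.image _
  have hinf : δ / 2 < infDist p (f^[k] '' D0) := by
    obtain ⟨q, hq, heq⟩ := hfinD.isCompact.exists_infDist_eq_dist (hD0ne.image _) p
    rw [heq]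
    obtain ⟨w, hw, rfl⟩ := hq
    obtain ⟨a, ha, rfl⟩ := hw
    rw [dist_comm]
    exact hc_far a ha
  refine lt_of_lt_of_le hinf (infDist_le_hausdorffDist_of_mem hpmem ?_)
  exact hEd_ne_top (hC0ne.image _) (hD0ne.image _) hfinC.isCompact hfinD.isCompact

lemma F1_isClosed : IsClosed (F1 Y N) := by
  rw [← isOpen_compl_iff, Metric.isOpen_iff]
  intro A hA
  -- A has two distinct points
  obtain ⟨u, hu⟩ := A.1.nonempty
  have hv : ∃ v ∈ (A.1 : Set Y), v ≠ u := by
    by_contra hcon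
    push_neg at hcon
    refine hA ⟨u, ?_⟩
    ext z
    simp only [Set.mem_singleton_iff]
    exact ⟨fun hz => hcon z hz, fun hz => hz ▸ hu⟩
  obtain ⟨v, hv, hvu⟩ := hv
  have hduv : 0 < dist u v := dist_pos.2 hvu.symm
  refine ⟨dist u v / 3, by positivity, ?_⟩
  intro B hB hBF1
  obtain ⟨z, hz⟩ := hBF1
  rw [mem_ball, Fn.dist_eq', hz, hausdorffDist_comm] at hB
  have hfin : EMetric.hausdorffEdist (A.1 : Set Y) ({z} : Set Y) ≠ ⊤ :=
    hEd_ne_top A.1.nonempty (Set.singleton_nonempty _) A.1.isCompact isCompact_singleton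
  have h1 : dist u z < dist u v / 3 := by
    have := infDist_le_hausdorffDist_of_mem hu hfin
    rw [Metric.infDist_singleton] at this
    exact lt_of_le_of_lt this hB
  have h2 : dist v z < dist u v / 3 := by
    have := infDist_le_hausdorffDist_of_mem hv hfin
    rw [Metric.infDist_singleton] at this
    exact lt_of_le_of_lt this hB
  have h3 : dist u v ≤ dist u z + dist z v := dist_triangle _ _ _
  rw [dist_comm z v] at h3
  linarith

/-- Near any singleton there is a non-singleton element of `Fn` (perfectness). -/
lemma exists_nonF1_near [ConnectedSpace Y] [Nontrivial Y] (hn : 2 ≤ N) (x : Y) {ε : ℝ}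
    (hε : 0 < ε) : ∃ B : Fn Y N, B ∉ F1 Y N ∧ hausdorffDist (B.1 : Set Y) ({x} : Set Y) < ε := by
  have hnotopen : ¬ IsOpen ({x} : Set Y) := by
    intro h
    rcases isClopen_iff.1 ⟨isClosed_singleton, h⟩ with h0 | huniv
    · exact (Set.singleton_nonempty x).ne_empty h0
    · obtain ⟨y, hy⟩ := exists_ne x
      have hy' : y ∈ ({x} : Set Y) := by rw [huniv]; exact Set.mem_univ y
      exact hy (by simpa using hy')
  rw [Metric.isOpen_singleton_iff] at hnotopen
  push_neg at hnotopen
  obtain ⟨x', hx'1, hx'2⟩ := hnotopen (ε / 2) (by positivity)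
  have hcard : ({x, x'} : Set Y).ncard ≤ N := by
    refine le_trans (Set.ncard_insert_le _ _) ?_
    rw [Set.ncard_singleton]; exact hn
  refine ⟨mkFn {x, x'} (Set.toFinite _) (Set.insert_nonempty _ _) hcard, ?_, ?_⟩
  · rintro ⟨z, hz⟩
    rw [mkFn_coe] at hz
    have h1 : x = z := by
      have : x ∈ ({z} : Set Y) := hz ▸ Set.mem_insert _ _
      simpa using this
    have h2 : x' = z := by
      have : x' ∈ ({z} : Set Y) := hz ▸ Set.mem_insert_of_mem _ rfl
      simpa using this
    exact hx'2 (h2.trans h1.symm)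
  · rw [mkFn_coe]
    refine lt_of_le_of_lt (hausdorffDist_le_of_infDist (half_pos hε).le ?_ ?_)
      (half_lt_self hε)
    · rintro u (rfl | rfl)
      · rw [Metric.infDist_singleton, dist_self]
        exact (half_pos hε).le
      · rw [Metric.infDist_singleton]
        exact hx'1.le
    · rintro u rfl
      refine (infDist_le_dist_of_mem (Set.mem_insert _ _)).trans ?_
      rw [dist_self]
      exact (half_pos hε).le

lemma SFnQ_preimage (C : Fn Y N) :
    F1 Y N ∪ SFnQ Y N ⁻¹' {SFnQ Y N C} = F1 Y N ∪ {C} := by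
  ext A
  simp only [Set.mem_union, Set.mem_preimage, Set.mem_singleton_iff]
  constructor
  · rintro (h | h)
    · exact Or.inl h
    · rcases Quotient.exact h with rfl | ⟨h1, _⟩
      · exact Or.inr rfl
      · exact Or.inl h1
  · rintro (h | rfl)
    · exact Or.inl h
    · exact Or.inr rfl

lemma SFnDist_le_dist (C D : Fn Y N) :
    SFnDist Y N (SFnQ Y N C) (SFnQ Y N D) ≤ dist C D := by
  show hausdorffDist _ _ ≤ _
  rw [SFnQ_preimage, SFnQ_preimage]
  refine hausdorffDist_le_of_infDist dist_nonneg ?_ ?_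
  · rintro A hA
    rcases hA with hA | hA
    · exact (infDist_le_dist_of_mem (Set.mem_union_left _ hA)).trans
        ((le_of_eq (dist_self A)).trans dist_nonneg)
    · rw [Set.mem_singleton_iff] at hA
      subst hA
      exact infDist_le_dist_of_mem (Set.mem_union_right _ (Set.mem_singleton _))
  · rintro A hA
    rcases hA with hA | hA
    · exact (infDist_le_dist_of_mem (Set.mem_union_left _ hA)).trans
        ((le_of_eq (dist_self A)).trans dist_nonneg)
    · rw [Set.mem_singleton_iff] at hA
      subst hA
      rw [dist_comm]
      exact infDist_le_dist_of_mem (Set.mem_union_right _ (Set.mem_singleton _))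

lemma SFnMap_iterate (f : Y → Y) (k : ℕ) (A : Fn Y N) :
    (SFnMap Y N f)^[k] (SFnQ Y N A) = SFnQ Y N ((FnMap Y N f)^[k] A) := by
  induction k with
  | zero => rfl
  | succ k ih =>
      rw [Function.iterate_succ_apply', Function.iterate_succ_apply', ih]
      rfl

lemma Fn_of_SFn [ConnectedSpace Y] [Nontrivial Y] (hn : 2 ≤ N) {f : Y → Y}
    (h : MultiSensitive (SFnDist Y N) (SFnMap Y N f)) :
    MultiSensitive dist (FnMap Y N f) := by
  obtain ⟨δ, hδ, H⟩ := h
  refine ⟨δ, hδ, ?_⟩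
  intro m hm U hUo hUne
  set W : Fin m → Set (Fn Y N) := fun i => U i \ F1 Y N with hW
  have hWo : ∀ i, IsOpen (W i) := fun i => (hUo i).sdiff F1_isClosed
  have hWne : ∀ i, (W i).Nonempty := by
    intro i
    obtain ⟨A, hA⟩ := hUne i
    obtain ⟨ε, hε, hball⟩ := Metric.isOpen_iff.1 (hUo i) A hA
    by_cases hF1 : A ∈ F1 Y N
    · obtain ⟨z, hz⟩ := hF1
      obtain ⟨B, hB1, hB2⟩ := exists_nonF1_near (Y := Y) (N := N) hn z hε
      refine ⟨B, hball ?_, hB1⟩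
      rw [mem_ball, Fn.dist_eq', hz]
      exact hB2
    · exact ⟨A, hA, hF1⟩
  set V : Fin m → Set (SFn Y N) := fun i => SFnQ Y N '' W i with hV
  have hpre : ∀ i, SFnQ Y N ⁻¹' (V i) = W i := by
    intro i
    ext A
    simp only [hV, Set.mem_preimage, Set.mem_image]
    constructor
    · rintro ⟨B, hB, hBA⟩
      rcases Quotient.exact hBA with rfl | ⟨h1, _⟩
      · exact hB
      · exact absurd h1 hB.2
    · intro hA
      exact ⟨A, hA, rfl⟩
  have hVo : ∀ i, IsOpen (V i) := by
    intro i
    show IsOpen (SFnQ Y N ⁻¹' V i)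
    · rw [hpre i]; exact hWo i
  have hVne : ∀ i, (V i).Nonempty := fun i => (hWne i).image _
  obtain ⟨k, hk, HH⟩ := H m hm V hVo hVne
  refine ⟨k, hk, ?_⟩
  intro i
  obtain ⟨χ₁, hχ₁, χ₂, hχ₂, hd⟩ := HH i
  obtain ⟨A, hA, rfl⟩ := hχ₁
  obtain ⟨B, hB, rfl⟩ := hχ₂
  rw [SFnMap_iterate, SFnMap_iterate] at hd
  refine ⟨A, hA.1, B, hB.1, lt_of_lt_of_le hd (SFnDist_le_dist _ _)⟩

end Helpers

theorem stmt2 (X : Type*) [MetricSpace X] [CompactSpace X] [ConnectedSpace X] [Nontrivial X]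
    (n : ℕ) (hn : 2 ≤ n) (f : X → X) (hf : Continuous f) :
    (MultiSensitive (dist : X → X → ℝ) f ↔ MultiSensitive dist (FnMap X n f)) ∧
    (MultiSensitive (SFnDist X n) (SFnMap X n f) → MultiSensitive dist (FnMap X n f)) :=
  ⟨⟨fun h => Fn_of_f h, fun h => f_of_Fn (le_trans one_le_two hn) h⟩,
    fun h => Fn_of_SFn hn h⟩
end

section
/- Let X be a continuum (a compact connected metric space with more than one point), let n ≥ 2 be an integer, and let f : X → X be a continuous map. Then F_n(f) is Z-transitive if and only if f is weakly mixing. -/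
open Metric Set TopologicalSpace

variable (X : Type*) [MetricSpace X] (n : ℕ)

/-- `g^k(U)` for `k : ℤ`, where for negative `k` it means the preimage under `g^{|k|}`. -/
def ZIterImage {Z : Type*} (g : Z → Z) (k : ℤ) (U : Set Z) : Set Z :=
  if 0 ≤ k then g^[k.toNat] '' U else g^[(-k).toNat] ⁻¹' U

/-- `g` is Z-transitive: for all nonempty open `U, V` there is `k : ℤ` with
`g^k(U) ∩ V ≠ ∅`. -/
def ZTransitive {Z : Type*} [TopologicalSpace Z] (g : Z → Z) : Prop :=
  ∀ U V : Set Z, IsOpen U → IsOpen V → U.Nonempty → V.Nonempty →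
    ∃ k : ℤ, (ZIterImage g k U ∩ V).Nonempty

/-- `g` is weakly mixing. -/
def WeaklyMixing {Z : Type*} [TopologicalSpace Z] (g : Z → Z) : Prop :=
  ∀ U₁ U₂ V₁ V₂ : Set Z, IsOpen U₁ → IsOpen U₂ → IsOpen V₁ → IsOpen V₂ →
    U₁.Nonempty → U₂.Nonempty → V₁.Nonempty → V₂.Nonempty →
    ∃ k : ℕ, 0 < k ∧ (g^[k] '' U₁ ∩ V₁).Nonempty ∧ (g^[k] '' U₂ ∩ V₂).Nonempty


namespace Stmt4Aux

variable {X : Type*} [MetricSpace X] {n : ℕ}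

lemma fnMap_coe (f : X → X) (D : Fn X n) :
    ((FnMap X n f D).1 : Set X) = f '' (D.1 : Set X) := rfl

lemma fnMap_iterate_coe (f : X → X) (k : ℕ) (D : Fn X n) :
    (((FnMap X n f)^[k] D).1 : Set X) = f^[k] '' (D.1 : Set X) := by
  induction k with
  | zero => simp
  | succ k ih =>
      rw [Function.iterate_succ_apply', fnMap_coe, ih, ← Set.image_comp,
        ← Function.iterate_succ']

lemma fn_dist_eq (D E : Fn X n) : dist D E = hausdorffDist (D.1 : Set X) (E.1 : Set X) := by
  rw [Subtype.dist_eq, NonemptyCompacts.dist_eq]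

noncomputable def elem (S : Set X) (h1 : S.Finite) (h2 : S.Nonempty) (h3 : S.ncard ≤ n) :
    Fn X n := ⟨⟨⟨S, h1.isCompact⟩, h2⟩, h1, h3⟩

@[simp] lemma elem_coe (S : Set X) (h1 : S.Finite) (h2 : S.Nonempty) (h3 : S.ncard ≤ n) :
    ((elem S h1 h2 h3).1 : Set X) = S := rfl

lemma fn_edist_ne_top (D E : Fn X n) :
    EMetric.hausdorffEdist (D.1 : Set X) (E.1 : Set X) ≠ ⊤ :=
  Metric.hausdorffEdist_ne_top_of_nonempty_of_bounded D.1.nonempty E.1.nonempty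
    D.2.1.isBounded E.2.1.isBounded

/-- Vietoris-type basic open set `⟨P⟩`. -/
def VOneS (P : Set X) (n : ℕ) : Set (Fn X n) := {D | (D.1 : Set X) ⊆ P}

/-- Vietoris-type basic open set `⟨P,Q⟩`. -/
def VTwoS (P Q : Set X) (n : ℕ) : Set (Fn X n) :=
  {D | (D.1 : Set X) ⊆ P ∪ Q ∧ ((D.1 : Set X) ∩ P).Nonempty ∧ ((D.1 : Set X) ∩ Q).Nonempty}

lemma subset_of_close {P : Set X} {δ : ℝ} {D : Fn X n}
    (hth : Metric.thickening δ (D.1 : Set X) ⊆ P) (E : Fn X n) (h : dist E D < δ) :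
    (E.1 : Set X) ⊆ P := by
  intro x hx
  rw [fn_dist_eq] at h
  obtain ⟨y, hy, hxy⟩ := Metric.exists_dist_lt_of_hausdorffDist_lt hx h (fn_edist_ne_top E D)
  exact hth (Metric.mem_thickening_iff.2 ⟨y, hy, hxy⟩)

lemma meets_of_close {p : X} {r : ℝ} {P : Set X} (hb : Metric.ball p r ⊆ P) {D : Fn X n}
    (hp : p ∈ (D.1 : Set X)) (E : Fn X n) (h : dist E D < r) :
    ((E.1 : Set X) ∩ P).Nonempty := by
  rw [fn_dist_eq] at h
  obtain ⟨x, hx, hxp⟩ := Metric.exists_dist_lt_of_hausdorffDist_lt' hp h (fn_edist_ne_top E D)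
  exact ⟨x, hx, hb (by rwa [Metric.mem_ball])⟩

lemma isOpen_vone {P : Set X} (hP : IsOpen P) : IsOpen (VOneS P n) := by
  rw [Metric.isOpen_iff]
  intro D hD
  obtain ⟨δ, hδ, hsub⟩ := (D.2.1.isCompact).exists_thickening_subset_open hP hD
  exact ⟨δ, hδ, fun E hE => subset_of_close hsub E (Metric.mem_ball.1 hE)⟩

lemma isOpen_vtwo {P Q : Set X} (hP : IsOpen P) (hQ : IsOpen Q) : IsOpen (VTwoS P Q n) := by
  rw [Metric.isOpen_iff]
  rintro D ⟨hsub, ⟨p, hpD, hpP⟩, ⟨q, hqD, hqQ⟩⟩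
  obtain ⟨δ₀, hδ₀, hth⟩ := (D.2.1.isCompact).exists_thickening_subset_open (hP.union hQ) hsub
  obtain ⟨r₁, hr₁, hb₁⟩ := Metric.isOpen_iff.1 hP p hpP
  obtain ⟨r₂, hr₂, hb₂⟩ := Metric.isOpen_iff.1 hQ q hqQ
  refine ⟨min δ₀ (min r₁ r₂), by positivity, fun E hE => ?_⟩
  have hE' : dist E D < min δ₀ (min r₁ r₂) := Metric.mem_ball.1 hE
  refine ⟨subset_of_close hth E (lt_of_lt_of_le hE' (min_le_left _ _)), ?_, ?_⟩
  · exact meets_of_close hb₁ hpD E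
      (lt_of_lt_of_le hE' (le_trans (min_le_right _ _) (min_le_left _ _)))
  · exact meets_of_close hb₂ hqD E
      (lt_of_lt_of_le hE' (le_trans (min_le_right _ _) (min_le_right _ _)))

lemma sing_mem_vone {P : Set X} {x : X} (hx : x ∈ P) (hn : 1 ≤ n) :
    elem {x} (Set.finite_singleton x) ⟨x, rfl⟩ (by simpa using hn) ∈ VOneS P n := by
  exact (Set.singleton_subset_iff.2 hx : ({x} : Set X) ⊆ P)

lemma pair_mem_vtwo {P Q : Set X} {x y : X} (hx : x ∈ P) (hy : y ∈ Q) (hn : 2 ≤ n) :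
    elem {x, y} (Set.toFinite _) ⟨x, by simp⟩
      (le_trans (le_trans (Set.ncard_insert_le x {y}) (by simp)) hn) ∈ VTwoS P Q n := by
  refine ⟨?_, ⟨x, (show x ∈ ({x, y} : Set X) by simp), hx⟩, ⟨y, (show y ∈ ({x, y} : Set X) by simp), hy⟩⟩
  intro z hz
  rcases hz with rfl | rfl
  · exact Or.inl hx
  · exact Or.inr hy

lemma ziter_nonneg {Z : Type*} (g : Z → Z) (k : ℤ) (hk : 0 ≤ k) (U : Set Z) :
    ZIterImage g k U = g^[k.toNat] '' U := if_pos hk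

lemma ziter_neg {Z : Type*} (g : Z → Z) (k : ℤ) (hk : ¬ 0 ≤ k) (U : Set Z) :
    ZIterImage g k U = g^[(-k).toNat] ⁻¹' U := if_neg hk


/-- From `ZTransitive (FnMap X n f)` we get ℤ-transitivity of `f` itself. -/
lemma fZT {f : X → X} (hZ : ZTransitive (FnMap X n f)) (hn : 1 ≤ n) :
    ∀ U V : Set X, IsOpen U → IsOpen V → U.Nonempty → V.Nonempty →
      ∃ m : ℕ, (f^[m] '' U ∩ V).Nonempty ∨ (f^[m] '' V ∩ U).Nonempty := by
  intro U V hU hV ⟨u, hu⟩ ⟨v, hv⟩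
  obtain ⟨k, hk⟩ := hZ (VOneS U n) (VOneS V n) (isOpen_vone hU) (isOpen_vone hV)
    ⟨_, sing_mem_vone hu hn⟩ ⟨_, sing_mem_vone hv hn⟩
  rcases le_or_gt 0 k with h0 | h0
  · rw [ziter_nonneg _ _ h0] at hk
    obtain ⟨E, ⟨D, hDU, rfl⟩, hEV⟩ := hk
    obtain ⟨d, hd⟩ := D.1.nonempty
    refine ⟨k.toNat, Or.inl ⟨f^[k.toNat] d, ⟨d, hDU hd, rfl⟩, ?_⟩⟩
    exact hEV (by rw [fnMap_iterate_coe]; exact ⟨d, hd, rfl⟩)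
  · rw [ziter_neg _ _ (not_le.2 h0)] at hk
    obtain ⟨D, hDU, hDV⟩ := hk
    obtain ⟨d, hd⟩ := D.1.nonempty
    refine ⟨(-k).toNat, Or.inr ⟨f^[(-k).toNat] d, ⟨d, hDV hd, rfl⟩, ?_⟩⟩
    have : ((((FnMap X n f)^[(-k).toNat]) D).1 : Set X) ⊆ U := hDU
    rw [fnMap_iterate_coe] at this
    exact this ⟨d, hd, rfl⟩

section Conn

variable [ConnectedSpace X] [Nontrivial X]

/-- In a connected nontrivial metric space, every ball meets the complement of any
countable set. -/
lemma exists_mem_ball_notMem (x : X) {r : ℝ} (hr : 0 < r) {B : Set X} (hB : B.Countable) :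
    ∃ z, z ∈ Metric.ball x r ∧ z ∉ B := by
  obtain ⟨y, hy⟩ := exists_ne x
  have hc : 0 < dist x y := dist_pos.2 (Ne.symm hy)
  have hcont : Continuous (fun z : X => dist x z) := by fun_prop
  have hIcc : Set.Icc 0 (dist x y) ⊆ Set.range (fun z => dist x z) := by
    have := intermediate_value_univ x y hcont
    rwa [dist_self] at this
  set c := min r (dist x y) with hcdef
  have hc0 : 0 < c := lt_min hr hc
  have hunc : ¬ (Set.Ioo (0:ℝ) c).Countable := by
    intro hcount
    have h1 : (Cardinal.mk (Set.Ioo (0:ℝ) c)) ≤ Cardinal.aleph0 := hcount.le_aleph0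
    rw [Cardinal.mk_Ioo_real hc0] at h1
    exact absurd h1 (not_le.2 Cardinal.aleph0_lt_continuum)
  have hsub : ¬ (Set.Ioo (0:ℝ) c ⊆ (fun z => dist x z) '' B) := by
    intro hsubset
    exact hunc ((hB.image _).mono hsubset)
  obtain ⟨t, htIoo, htB⟩ := Set.not_subset.1 hsub
  obtain ⟨ht0, htc⟩ := htIoo
  obtain ⟨z, hz⟩ : ∃ z, dist x z = t :=
    hIcc ⟨le_of_lt ht0, le_of_lt (lt_of_lt_of_le htc (min_le_right _ _))⟩
  refine ⟨z, ?_, fun hzB => htB ⟨z, hzB, hz⟩⟩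
  rw [Metric.mem_ball, dist_comm, hz]
  exact lt_of_lt_of_le htc (min_le_left _ _)

/-- Any nonempty open set meets the complement of any countable set. -/
lemma exists_mem_open_notMem {U : Set X} (hU : IsOpen U) (hne : U.Nonempty) {B : Set X}
    (hB : B.Countable) : ∃ z ∈ U, z ∉ B := by
  obtain ⟨x, hx⟩ := hne
  obtain ⟨r, hr, hball⟩ := Metric.isOpen_iff.1 hU x hx
  obtain ⟨z, hz, hzB⟩ := exists_mem_ball_notMem x hr hB
  exact ⟨z, hball hz, hzB⟩

end Conn


section Generic

variable [CompactSpace X]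

lemma countable_fat_fibers (g : X → X) :
    {q : X | (interior (g ⁻¹' {q})).Nonempty}.Countable := by
  obtain ⟨D, hDc, hDd⟩ := TopologicalSpace.exists_countable_dense X
  refine (hDc.image g).mono ?_
  rintro q hq
  obtain ⟨d, hdD, hdi⟩ := hDd.exists_mem_open isOpen_interior hq
  have h1 : d ∈ g ⁻¹' {q} := interior_subset hdi
  exact ⟨d, hdD, h1⟩

end Generic

lemma diff_biUnion_closed {ι : Type*} {W : Set X} (hW : IsOpen W) (hne : W.Nonempty)
    (s : Finset ι) (F : ι → Set X) (hcl : ∀ i ∈ s, IsClosed (F i))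
    (hint : ∀ i ∈ s, interior (F i) = ∅) :
    IsOpen (W \ ⋃ i ∈ s, F i) ∧ (W \ ⋃ i ∈ s, F i).Nonempty := by
  classical
  induction s using Finset.induction_on with
  | empty => simpa using ⟨hW, hne⟩
  | @insert a s ha ih =>
      obtain ⟨ho, hn⟩ := ih (fun i hi => hcl i (Finset.mem_insert_of_mem hi))
        (fun i hi => hint i (Finset.mem_insert_of_mem hi))
      have heq : (W \ ⋃ i ∈ insert a s, F i) = (W \ ⋃ i ∈ s, F i) \ F a := by
        rw [Set.diff_diff]
        congr 1
        rw [Finset.set_biUnion_insert, Set.union_comm]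
      rw [heq]
      have hcl' : IsClosed (F a) := hcl a (Finset.mem_insert_self a s)
      refine ⟨ho.sdiff hcl', ?_⟩
      by_contra hc
      rw [Set.not_nonempty_iff_eq_empty, Set.diff_eq_empty] at hc
      have : (W \ ⋃ i ∈ s, F i) ⊆ interior (F a) := ho.subset_interior_iff.2 hc
      rw [hint a (Finset.mem_insert_self a s)] at this
      exact hn.ne_empty (Set.subset_empty_iff.1 this)


section LemZ

variable [CompactSpace X] [ConnectedSpace X] [Nontrivial X]

/-- ℤ-transitivity implies forward transitivity on a nondegenerate continuum
(the absorption argument). -/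
lemma lemmaZ {f : X → X} (hf : Continuous f)
    (hzt : ∀ U V : Set X, IsOpen U → IsOpen V → U.Nonempty → V.Nonempty →
      ∃ m : ℕ, (f^[m] '' U ∩ V).Nonempty ∨ (f^[m] '' V ∩ U).Nonempty) :
    ∀ U V : Set X, IsOpen U → IsOpen V → U.Nonempty → V.Nonempty →
      ∃ k : ℕ, (f^[k] '' U ∩ V).Nonempty := by
  intro U V hU hV hUne hVne
  by_contra H
  push_neg at H
  have H' : ∀ (k : ℕ) (x : X), x ∈ U → f^[k] x ∉ V := fun k x hx hv =>
    Set.eq_empty_iff_forall_notMem.1 (H k) (f^[k] x) ⟨⟨x, hx, rfl⟩, hv⟩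
  classical
  -- the escaping open set and the absorbing closed invariant set
  set G : Set X := ⋃ m : ℕ, f^[m] ⁻¹' V with hGdef
  have hUK : ∀ x ∈ U, x ∉ G := by
    intro x hx hG
    obtain ⟨m, hm⟩ := Set.mem_iUnion.1 hG
    exact H' m x hx hm
  have hVG : V ⊆ G := fun x hx => Set.mem_iUnion.2 ⟨0, by simpa using hx⟩
  have hGpre : ∀ x, f x ∈ G → x ∈ G := by
    intro x hx
    obtain ⟨m, hm⟩ := Set.mem_iUnion.1 hx
    exact Set.mem_iUnion.2 ⟨m + 1, by simpa [Function.iterate_succ_apply] using hm⟩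
  have hGiter : ∀ (j : ℕ) (x : X), x ∉ G → f^[j] x ∉ G := by
    intro j
    induction j with
    | zero => simp
    | succ j ih =>
        intro x hx hmem
        rw [Function.iterate_succ_apply'] at hmem
        exact ih x hx (hGpre _ hmem)
  -- a common entry time from V into U
  obtain ⟨m₁, hor⟩ := hzt V U hV hU hVne hUne
  have hk : ∃ (k₀ : ℕ) (v₀ : X), v₀ ∈ V ∧ f^[k₀] v₀ ∈ U := by
    rcases hor with h | h
    · obtain ⟨y, ⟨v, hv, rfl⟩, hyU⟩ := h
      exact ⟨m₁, v, hv, hyU⟩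
    · obtain ⟨y, ⟨u, hu, rfl⟩, hyV⟩ := h
      exact absurd hyV (H' m₁ u hu)
  obtain ⟨k₀, v₀, hv₀V, hv₀U⟩ := hk
  have hk₀pos : 0 < k₀ := by
    rcases Nat.eq_zero_or_pos k₀ with h0 | h
    · subst h0
      simp only [Function.iterate_zero_apply] at hv₀U
      exact absurd (by simpa using hv₀V) (H' 0 v₀ hv₀U)
    · exact h
  set W : Set X := V ∩ f^[k₀] ⁻¹' U with hWdef
  have hWopen : IsOpen W := hV.inter (IsOpen.preimage (hf.iterate k₀) hU)
  have hWne : W.Nonempty := ⟨v₀, hv₀V, hv₀U⟩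
  -- generic center q : all relevant fibers over q have empty interior
  have hbQc : (⋃ m ∈ Set.Ico 1 k₀, {p : X | (interior (f^[m] ⁻¹' {p})).Nonempty}).Countable :=
    (Set.to_countable _).biUnion (fun m _ => countable_fat_fibers (f^[m]))
  obtain ⟨q, hqW, hqbQ⟩ := exists_mem_open_notMem hWopen hWne hbQc
  have hfib : ∀ m ∈ Finset.Ico 1 k₀, interior (f^[m] ⁻¹' {q}) = ∅ := by
    intro m hm
    by_contra hne
    have hmem : m ∈ Set.Ico 1 k₀ := by simpa using Finset.mem_Ico.1 hm
    exact hqbQ (Set.mem_biUnion hmem (Set.nonempty_iff_ne_empty.2 hne))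
  -- second center s avoiding q's orbit relations
  obtain ⟨hW₂open, hW₂ne⟩ := diff_biUnion_closed hWopen hWne (Finset.Ico 1 k₀)
    (fun m => f^[m] ⁻¹' {q})
    (fun m _ => IsClosed.preimage (hf.iterate m) isClosed_singleton)
    hfib
  have hBc : (insert q ((fun m => f^[m] q) '' (Set.Ico 1 k₀))).Countable :=
    ((Set.to_countable _).image _).insert q
  obtain ⟨s, hsW₂, hsB⟩ := exists_mem_open_notMem hW₂open hW₂ne hBc
  have hsW : s ∈ W := hsW₂.1
  have hsq : s ≠ q := fun h => hsB (by rw [h]; exact Set.mem_insert q _)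
  have hfib' : ∀ m, 1 ≤ m → m < k₀ → f^[m] s ≠ q := by
    intro m h1 h2 heq
    have hmem : m ∈ Finset.Ico 1 k₀ := Finset.mem_Ico.2 ⟨h1, h2⟩
    exact hsW₂.2 (Set.mem_biUnion hmem (show s ∈ f^[m] ⁻¹' {q} by simpa using heq))
  have himg : ∀ m, 1 ≤ m → m < k₀ → f^[m] q ≠ s := by
    intro m h1 h2 heq
    exact hsB (Set.mem_insert_iff.2 (Or.inr ⟨m, ⟨h1, h2⟩, heq⟩))
  have hd : ∀ m ∈ Finset.range k₀, 0 < dist (f^[m] q) s := by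
    intro m hm
    rcases Nat.eq_zero_or_pos m with h0 | h1
    · subst h0
      simpa using dist_pos.2 (fun h => hsq (h.symm))
    · exact dist_pos.2 (himg m h1 (Finset.mem_range.1 hm))
  obtain ⟨m₀, hm₀mem, hm₀min⟩ := Finset.exists_min_image (Finset.range k₀)
    (fun m => dist (f^[m] q) s) ⟨0, Finset.mem_range.2 hk₀pos⟩
  set σ : ℝ := dist (f^[m₀] q) s / 2 with hσdef
  have hσpos : 0 < σ := half_pos (hd m₀ hm₀mem)
  have hσlt : ∀ m ∈ Finset.range k₀, σ < dist (f^[m] q) s := fun m hm =>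
    lt_of_lt_of_le (half_lt_self (hd m₀ hm₀mem)) (hm₀min m hm)
  have hds : ∀ m ∈ Finset.Ico 1 k₀, 0 < dist (f^[m] s) q := by
    intro m hm
    obtain ⟨h1, h2⟩ := Finset.mem_Ico.1 hm
    exact dist_pos.2 (hfib' m h1 h2)
  -- the two committed open sets
  set S : Set X := W ∩ Metric.ball s σ ∩
      ⋂ m ∈ Finset.Ico 1 k₀, f^[m] ⁻¹' (Metric.ball (f^[m] s) (dist (f^[m] s) q / 2))
    with hSdef
  have hSopen : IsOpen S :=
    ((hWopen.inter Metric.isOpen_ball).inter (isOpen_biInter_finset fun m _ =>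
      IsOpen.preimage (hf.iterate m) Metric.isOpen_ball))
  have hsS : s ∈ S := by
    refine ⟨⟨hsW, Metric.mem_ball_self hσpos⟩, ?_⟩
    refine Set.mem_biInter fun m hm => ?_
    exact Metric.mem_ball_self (half_pos (hds m hm))
  set Q : Set X := (W ∩ ⋂ m ∈ Finset.range k₀, f^[m] ⁻¹' (Metric.closedBall s σ)ᶜ) ∩
      ⋂ m ∈ Finset.Ico 1 k₀, (Metric.closedBall (f^[m] s) (dist (f^[m] s) q / 2))ᶜ
    with hQdef
  have hQopen : IsOpen Q := by
    refine IsOpen.inter (hWopen.inter (isOpen_biInter_finset fun m _ => ?_))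
      (isOpen_biInter_finset fun m _ => Metric.isClosed_closedBall.isOpen_compl)
    exact IsOpen.preimage (hf.iterate m) Metric.isClosed_closedBall.isOpen_compl
  have hqQ : q ∈ Q := by
    refine ⟨⟨hqW, Set.mem_biInter fun m hm => ?_⟩, Set.mem_biInter fun m hm => ?_⟩
    · intro hball
      exact absurd (Metric.mem_closedBall.1 hball) (not_le.2 (hσlt m hm))
    · intro hball
      rw [Metric.mem_closedBall, dist_comm] at hball
      exact absurd hball (not_le.2 (half_lt_self (hds m hm)))
  -- absorption of W at time k₀ (once in Vᶜ-side K, never back in G)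
  have habs : ∀ x ∈ W, ∀ m, k₀ ≤ m → f^[m] x ∉ G := by
    intro x hx m hm
    have h1 : f^[k₀] x ∉ G := fun hmem => hUK _ hx.2 hmem
    have h2 : f^[m - k₀] (f^[k₀] x) ∉ G := hGiter _ _ h1
    rwa [← Function.iterate_add_apply, Nat.sub_add_cancel hm] at h2
  have hSG : S ⊆ G := fun x hx => hVG hx.1.1.1
  have hQG : Q ⊆ G := fun x hx => hVG hx.1.1.1
  -- final contradiction via ℤ-transitivity on (Q,S)
  obtain ⟨m, hor2⟩ := hzt Q S hQopen hSopen ⟨q, hqQ⟩ ⟨s, hsS⟩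
  rcases hor2 with h | h
  · obtain ⟨y, ⟨x, hxQ, rfl⟩, hyS⟩ := h
    rcases lt_or_ge m k₀ with hlt | hge
    · have hxm : f^[m] x ∈ (Metric.closedBall s σ)ᶜ :=
        Set.mem_iInter₂.1 hxQ.1.2 m (Finset.mem_range.2 hlt)
      exact hxm (Metric.ball_subset_closedBall hyS.1.2)
    · exact habs x hxQ.1.1 m hge (hSG hyS)
  · obtain ⟨y, ⟨x, hxS, rfl⟩, hyQ⟩ := h
    rcases lt_or_ge m k₀ with hlt | hge
    · rcases Nat.eq_zero_or_pos m with h0 | h1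
      · subst h0
        simp only [Function.iterate_zero_apply] at hyQ
        have hxm : f^[0] x ∈ (Metric.closedBall s σ)ᶜ :=
          Set.mem_iInter₂.1 hyQ.1.2 0 (Finset.mem_range.2 hk₀pos)
        simp only [Function.iterate_zero_apply] at hxm
        exact hxm (Metric.ball_subset_closedBall hxS.1.2)
      · have hin : f^[m] x ∈ Metric.ball (f^[m] s) (dist (f^[m] s) q / 2) :=
          Set.mem_iInter₂.1 hxS.2 m (Finset.mem_Ico.2 ⟨h1, hlt⟩)
        have hout : f^[m] x ∈ (Metric.closedBall (f^[m] s) (dist (f^[m] s) q / 2))ᶜ :=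
          Set.mem_iInter₂.1 hyQ.2 m (Finset.mem_Ico.2 ⟨h1, hlt⟩)
        exact hout (Metric.ball_subset_closedBall hin)
    · exact habs x hxS.1.1 m hge (hQG hyQ)


/-- The common-departure property: from any open set, two prescribed open targets can be
hit at a common time. -/
lemma starProp {f : X → X} (hf : Continuous f) (hn : 2 ≤ n)
    (hZ : ZTransitive (FnMap X n f)) :
    ∀ A C1 C2 : Set X, IsOpen A → IsOpen C1 → IsOpen C2 → A.Nonempty → C1.Nonempty →
      C2.Nonempty → ∃ k : ℕ, (f^[k] '' A ∩ C1).Nonempty ∧ (f^[k] '' A ∩ C2).Nonempty := by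
  have h1n : 1 ≤ n := le_trans one_le_two hn
  have hzt := fZT hZ h1n
  have htrans := lemmaZ hf hzt
  intro A C1 C2 hA hC1 hC2 hAne hC1ne hC2ne
  by_cases hcap : (C1 ∩ C2).Nonempty
  · obtain ⟨k, y, hyim, hy12⟩ := htrans A (C1 ∩ C2) hA (hC1.inter hC2) hAne hcap
    exact ⟨k, ⟨y, hyim, hy12.1⟩, ⟨y, hyim, hy12.2⟩⟩
  by_contra H
  have H' : ∀ (k : ℕ) (x y : X), x ∈ A → y ∈ A → f^[k] x ∈ C1 → f^[k] y ∈ C2 → False := by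
    intro k x y hx hy h1 h2
    exact H ⟨k, ⟨f^[k] x, ⟨x, hx, rfl⟩, h1⟩, ⟨f^[k] y, ⟨y, hy, rfl⟩, h2⟩⟩
  classical
  -- common arrival time from C1, C2 into A
  obtain ⟨c1, hc1⟩ := hC1ne
  obtain ⟨c2, hc2⟩ := hC2ne
  obtain ⟨k', hk'⟩ := hZ (VTwoS C1 C2 n) (VOneS A n) (isOpen_vtwo hC1 hC2) (isOpen_vone hA)
    ⟨_, pair_mem_vtwo hc1 hc2 hn⟩ ⟨_, sing_mem_vone hAne.choose_spec h1n⟩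
  have hsync : ∃ (j : ℕ) (d1 d2 : X), d1 ∈ C1 ∧ d2 ∈ C2 ∧ f^[j] d1 ∈ A ∧ f^[j] d2 ∈ A := by
    rcases le_or_gt 0 k' with h0 | h0
    · rw [ziter_nonneg _ _ h0] at hk'
      obtain ⟨E, ⟨D, hD, rfl⟩, hEA⟩ := hk'
      obtain ⟨hDsub, ⟨d1, hd1D, hd1⟩, ⟨d2, hd2D, hd2⟩⟩ := hD
      have hEA' : f^[k'.toNat] '' (D.1 : Set X) ⊆ A := by
        rw [← fnMap_iterate_coe]; exact hEA
      exact ⟨k'.toNat, d1, d2, hd1, hd2, hEA' ⟨d1, hd1D, rfl⟩, hEA' ⟨d2, hd2D, rfl⟩⟩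
    · rw [ziter_neg _ _ (not_le.2 h0)] at hk'
      obtain ⟨D, hDW, hDA⟩ := hk'
      have hDW' := hDW
      unfold VTwoS at hDW'
      obtain ⟨_, ⟨y1, hy1im, hy1⟩, ⟨y2, hy2im, hy2⟩⟩ :
          (((FnMap X n f)^[(-k').toNat] D).1 : Set X) ⊆ C1 ∪ C2 ∧
          ((((FnMap X n f)^[(-k').toNat] D).1 : Set X) ∩ C1).Nonempty ∧
          ((((FnMap X n f)^[(-k').toNat] D).1 : Set X) ∩ C2).Nonempty := hDW'
      rw [fnMap_iterate_coe] at hy1im hy2im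
      obtain ⟨e1, he1, rfl⟩ := hy1im
      obtain ⟨e2, he2, rfl⟩ := hy2im
      exact (H' _ e1 e2 (hDA he1) (hDA he2) hy1 hy2).elim
  obtain ⟨j, d1, d2, hd1C, hd2C, hd1A, hd2A⟩ := hsync
  have hjpos : 0 < j := by
    rcases Nat.eq_zero_or_pos j with h0 | h
    · subst h0
      simp only [Function.iterate_zero_apply] at hd1A hd2A
      exact (H' 0 d1 d2 hd1A hd2A (by simpa using hd1C) (by simpa using hd2C)).elim
    · exact h
  set W1 : Set X := C1 ∩ f^[j] ⁻¹' A with hW1def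
  set W2 : Set X := C2 ∩ f^[j] ⁻¹' A with hW2def
  have hW1open : IsOpen W1 := hC1.inter (IsOpen.preimage (hf.iterate j) hA)
  have hW2open : IsOpen W2 := hC2.inter (IsOpen.preimage (hf.iterate j) hA)
  have hW1ne : W1.Nonempty := ⟨d1, hd1C, hd1A⟩
  have hW2ne : W2.Nonempty := ⟨d2, hd2C, hd2A⟩
  -- generic centers
  have hbQc : (⋃ m ∈ Set.Ico 1 j, {p : X | (interior (f^[m] ⁻¹' {p})).Nonempty}).Countable :=
    (Set.to_countable _).biUnion (fun m _ => countable_fat_fibers (f^[m]))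
  obtain ⟨q1, hq1W, hq1bQ⟩ := exists_mem_open_notMem hW1open hW1ne hbQc
  obtain ⟨q2, hq2W, hq2bQ⟩ := exists_mem_open_notMem hW2open hW2ne hbQc
  have hfib : ∀ i ∈ ({q1, q2} : Set X), ∀ m ∈ Finset.Ico 1 j,
      interior (f^[m] ⁻¹' {i}) = ∅ := by
    rintro i hi m hm
    by_contra hne
    have hmem : m ∈ Set.Ico 1 j := by simpa using Finset.mem_Ico.1 hm
    rcases hi with rfl | rfl
    · exact hq1bQ (Set.mem_biUnion hmem (Set.nonempty_iff_ne_empty.2 hne))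
    · exact hq2bQ (Set.mem_biUnion hmem (Set.nonempty_iff_ne_empty.2 hne))
  -- choose s1
  have step1 := diff_biUnion_closed hW1open hW1ne (Finset.Ico 1 j) (fun m => f^[m] ⁻¹' {q1})
    (fun m _ => IsClosed.preimage (hf.iterate m) isClosed_singleton)
    (fun m hm => hfib q1 (by simp) m hm)
  have step2 := diff_biUnion_closed step1.1 step1.2 (Finset.Ico 1 j) (fun m => f^[m] ⁻¹' {q2})
    (fun m _ => IsClosed.preimage (hf.iterate m) isClosed_singleton)
    (fun m hm => hfib q2 (by simp) m hm)
  have hBc : (insert q1 (insert q2 (((fun m => f^[m] q1) '' (Set.Ico 1 j)) ∪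
      ((fun m => f^[m] q2) '' (Set.Ico 1 j))))).Countable :=
    ((((Set.to_countable _).image _).union ((Set.to_countable _).image _)).insert q2).insert q1
  obtain ⟨s1, hs1mem, hs1B⟩ := exists_mem_open_notMem step2.1 step2.2 hBc
  -- choose s2
  have step1' := diff_biUnion_closed hW2open hW2ne (Finset.Ico 1 j) (fun m => f^[m] ⁻¹' {q1})
    (fun m _ => IsClosed.preimage (hf.iterate m) isClosed_singleton)
    (fun m hm => hfib q1 (by simp) m hm)
  have step2' := diff_biUnion_closed step1'.1 step1'.2 (Finset.Ico 1 j) (fun m => f^[m] ⁻¹' {q2})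
    (fun m _ => IsClosed.preimage (hf.iterate m) isClosed_singleton)
    (fun m hm => hfib q2 (by simp) m hm)
  obtain ⟨s2, hs2mem, hs2B⟩ := exists_mem_open_notMem step2'.1 step2'.2 hBc
  have hs1W : s1 ∈ W1 := hs1mem.1.1
  have hs2W : s2 ∈ W2 := hs2mem.1.1
  -- all needed inequalities
  have hfib1 : ∀ m, 1 ≤ m → m < j → f^[m] s1 ≠ q1 ∧ f^[m] s1 ≠ q2 := by
    intro m h1 h2
    constructor
    · intro heq
      exact hs1mem.1.2 (Set.mem_biUnion (Finset.mem_Ico.2 ⟨h1, h2⟩)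
        (show s1 ∈ f^[m] ⁻¹' {q1} by simpa using heq))
    · intro heq
      exact hs1mem.2 (Set.mem_biUnion (Finset.mem_Ico.2 ⟨h1, h2⟩)
        (show s1 ∈ f^[m] ⁻¹' {q2} by simpa using heq))
  have hfib2 : ∀ m, 1 ≤ m → m < j → f^[m] s2 ≠ q1 ∧ f^[m] s2 ≠ q2 := by
    intro m h1 h2
    constructor
    · intro heq
      exact hs2mem.1.2 (Set.mem_biUnion (Finset.mem_Ico.2 ⟨h1, h2⟩)
        (show s2 ∈ f^[m] ⁻¹' {q1} by simpa using heq))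
    · intro heq
      exact hs2mem.2 (Set.mem_biUnion (Finset.mem_Ico.2 ⟨h1, h2⟩)
        (show s2 ∈ f^[m] ⁻¹' {q2} by simpa using heq))
  have himg1 : ∀ m, 1 ≤ m → m < j → f^[m] q1 ≠ s1 ∧ f^[m] q2 ≠ s1 := by
    intro m h1 h2
    have hmem : m ∈ Set.Ico 1 j := ⟨h1, h2⟩
    constructor
    · intro heq
      exact hs1B (Set.mem_insert_iff.2 (Or.inr (Set.mem_insert_iff.2 (Or.inr
        (Set.mem_union_left _ ⟨m, hmem, heq⟩)))))
    · intro heq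
      exact hs1B (Set.mem_insert_iff.2 (Or.inr (Set.mem_insert_iff.2 (Or.inr
        (Set.mem_union_right _ ⟨m, hmem, heq⟩)))))
  have himg2 : ∀ m, 1 ≤ m → m < j → f^[m] q1 ≠ s2 ∧ f^[m] q2 ≠ s2 := by
    intro m h1 h2
    have hmem : m ∈ Set.Ico 1 j := ⟨h1, h2⟩
    constructor
    · intro heq
      exact hs2B (Set.mem_insert_iff.2 (Or.inr (Set.mem_insert_iff.2 (Or.inr
        (Set.mem_union_left _ ⟨m, hmem, heq⟩)))))
    · intro heq
      exact hs2B (Set.mem_insert_iff.2 (Or.inr (Set.mem_insert_iff.2 (Or.inr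
        (Set.mem_union_right _ ⟨m, hmem, heq⟩)))))
  have hq1s1 : q1 ≠ s1 := by
    intro h
    refine hs1B ?_
    rw [← h]
    exact Set.mem_insert q1 _
  have hq2s2 : q2 ≠ s2 := by
    intro h
    refine hs2B ?_
    rw [← h]
    exact Set.mem_insert_iff.2 (Or.inr (Set.mem_insert q2 _))
  have hdisj12 : ∀ x, x ∈ C1 → x ∈ C2 → False := fun x h1 h2 => hcap ⟨x, h1, h2⟩
  have hq2s1 : q2 ≠ s1 := fun h => hdisj12 s1 hs1W.1 (h ▸ hq2W.1)
  have hq1s2 : q1 ≠ s2 := fun h => hdisj12 s2 (h ▸ hq1W.1) hs2W.1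
  -- positive distances for the minima
  have hdmin1 : ∀ m ∈ Finset.range j, 0 < min (dist (f^[m] q1) s1) (dist (f^[m] q2) s1) := by
    intro m hm
    rcases Nat.eq_zero_or_pos m with h0 | h1
    · subst h0
      simp only [Function.iterate_zero_apply]
      exact lt_min (dist_pos.2 hq1s1) (dist_pos.2 hq2s1)
    · exact lt_min (dist_pos.2 (himg1 m h1 (Finset.mem_range.1 hm)).1)
        (dist_pos.2 (himg1 m h1 (Finset.mem_range.1 hm)).2)
  have hdmin2 : ∀ m ∈ Finset.range j, 0 < min (dist (f^[m] q1) s2) (dist (f^[m] q2) s2) := by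
    intro m hm
    rcases Nat.eq_zero_or_pos m with h0 | h1
    · subst h0
      simp only [Function.iterate_zero_apply]
      exact lt_min (dist_pos.2 hq1s2) (dist_pos.2 hq2s2)
    · exact lt_min (dist_pos.2 (himg2 m h1 (Finset.mem_range.1 hm)).1)
        (dist_pos.2 (himg2 m h1 (Finset.mem_range.1 hm)).2)
  obtain ⟨m₁, hm₁mem, hm₁min⟩ := Finset.exists_min_image (Finset.range j)
    (fun m => min (dist (f^[m] q1) s1) (dist (f^[m] q2) s1)) ⟨0, Finset.mem_range.2 hjpos⟩
  obtain ⟨m₂, hm₂mem, hm₂min⟩ := Finset.exists_min_image (Finset.range j)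
    (fun m => min (dist (f^[m] q1) s2) (dist (f^[m] q2) s2)) ⟨0, Finset.mem_range.2 hjpos⟩
  set σ1 : ℝ := min (dist (f^[m₁] q1) s1) (dist (f^[m₁] q2) s1) / 2 with hσ1def
  set σ2 : ℝ := min (dist (f^[m₂] q1) s2) (dist (f^[m₂] q2) s2) / 2 with hσ2def
  have hσ1pos : 0 < σ1 := half_pos (hdmin1 m₁ hm₁mem)
  have hσ2pos : 0 < σ2 := half_pos (hdmin2 m₂ hm₂mem)
  have hσ1lt : ∀ m ∈ Finset.range j, σ1 < min (dist (f^[m] q1) s1) (dist (f^[m] q2) s1) :=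
    fun m hm => lt_of_lt_of_le (half_lt_self (hdmin1 m₁ hm₁mem)) (hm₁min m hm)
  have hσ2lt : ∀ m ∈ Finset.range j, σ2 < min (dist (f^[m] q1) s2) (dist (f^[m] q2) s2) :=
    fun m hm => lt_of_lt_of_le (half_lt_self (hdmin2 m₂ hm₂mem)) (hm₂min m hm)
  -- the per-time localization radii for s1, s2
  set ρ1 : ℕ → ℝ := fun m => min (dist (f^[m] s1) q1) (dist (f^[m] s1) q2) / 2 with hρ1def
  set ρ2 : ℕ → ℝ := fun m => min (dist (f^[m] s2) q1) (dist (f^[m] s2) q2) / 2 with hρ2def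
  have hρ1pos : ∀ m ∈ Finset.Ico 1 j, 0 < ρ1 m := by
    intro m hm
    obtain ⟨h1, h2⟩ := Finset.mem_Ico.1 hm
    exact half_pos (lt_min (dist_pos.2 (hfib1 m h1 h2).1) (dist_pos.2 (hfib1 m h1 h2).2))
  have hρ2pos : ∀ m ∈ Finset.Ico 1 j, 0 < ρ2 m := by
    intro m hm
    obtain ⟨h1, h2⟩ := Finset.mem_Ico.1 hm
    exact half_pos (lt_min (dist_pos.2 (hfib2 m h1 h2).1) (dist_pos.2 (hfib2 m h1 h2).2))
  -- the four sets
  set S1 : Set X := W1 ∩ Metric.ball s1 σ1 ∩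
      ⋂ m ∈ Finset.Ico 1 j, f^[m] ⁻¹' (Metric.ball (f^[m] s1) (ρ1 m)) with hS1def
  set S2 : Set X := W2 ∩ Metric.ball s2 σ2 ∩
      ⋂ m ∈ Finset.Ico 1 j, f^[m] ⁻¹' (Metric.ball (f^[m] s2) (ρ2 m)) with hS2def
  set Q1 : Set X := (W1 ∩ ⋂ m ∈ Finset.range j,
        f^[m] ⁻¹' ((Metric.closedBall s1 σ1)ᶜ ∩ (Metric.closedBall s2 σ2)ᶜ)) ∩
      ⋂ m ∈ Finset.Ico 1 j,
        ((Metric.closedBall (f^[m] s1) (ρ1 m))ᶜ ∩ (Metric.closedBall (f^[m] s2) (ρ2 m))ᶜ)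
    with hQ1def
  set Q2 : Set X := (W2 ∩ ⋂ m ∈ Finset.range j,
        f^[m] ⁻¹' ((Metric.closedBall s1 σ1)ᶜ ∩ (Metric.closedBall s2 σ2)ᶜ)) ∩
      ⋂ m ∈ Finset.Ico 1 j,
        ((Metric.closedBall (f^[m] s1) (ρ1 m))ᶜ ∩ (Metric.closedBall (f^[m] s2) (ρ2 m))ᶜ)
    with hQ2def
  have hS1open : IsOpen S1 := (hW1open.inter Metric.isOpen_ball).inter
    (isOpen_biInter_finset fun m _ => IsOpen.preimage (hf.iterate m) Metric.isOpen_ball)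
  have hS2open : IsOpen S2 := (hW2open.inter Metric.isOpen_ball).inter
    (isOpen_biInter_finset fun m _ => IsOpen.preimage (hf.iterate m) Metric.isOpen_ball)
  have hQmid : IsOpen ((Metric.closedBall s1 σ1)ᶜ ∩ (Metric.closedBall s2 σ2)ᶜ) :=
    (Metric.isClosed_closedBall.isOpen_compl).inter Metric.isClosed_closedBall.isOpen_compl
  have hQ1open : IsOpen Q1 := (hW1open.inter (isOpen_biInter_finset fun m _ =>
      IsOpen.preimage (hf.iterate m) hQmid)).inter
    (isOpen_biInter_finset fun m _ =>
      (Metric.isClosed_closedBall.isOpen_compl).inter Metric.isClosed_closedBall.isOpen_compl)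
  have hQ2open : IsOpen Q2 := (hW2open.inter (isOpen_biInter_finset fun m _ =>
      IsOpen.preimage (hf.iterate m) hQmid)).inter
    (isOpen_biInter_finset fun m _ =>
      (Metric.isClosed_closedBall.isOpen_compl).inter Metric.isClosed_closedBall.isOpen_compl)
  have hs1S1 : s1 ∈ S1 := by
    refine ⟨⟨hs1W, Metric.mem_ball_self hσ1pos⟩, Set.mem_biInter fun m hm => ?_⟩
    exact Metric.mem_ball_self (hρ1pos m hm)
  have hs2S2 : s2 ∈ S2 := by
    refine ⟨⟨hs2W, Metric.mem_ball_self hσ2pos⟩, Set.mem_biInter fun m hm => ?_⟩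
    exact Metric.mem_ball_self (hρ2pos m hm)
  have hq1Q1 : q1 ∈ Q1 := by
    refine ⟨⟨hq1W, Set.mem_biInter fun m hm => ⟨?_, ?_⟩⟩, Set.mem_biInter fun m hm => ⟨?_, ?_⟩⟩
    · intro hball
      exact absurd (Metric.mem_closedBall.1 hball)
        (not_le.2 (lt_of_lt_of_le (hσ1lt m hm) (min_le_left _ _)))
    · intro hball
      exact absurd (Metric.mem_closedBall.1 hball)
        (not_le.2 (lt_of_lt_of_le (hσ2lt m hm) (min_le_left _ _)))
    · intro hball
      rw [Metric.mem_closedBall, dist_comm] at hball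
      refine absurd hball (not_le.2 ?_)
      calc ρ1 m < min (dist (f^[m] s1) q1) (dist (f^[m] s1) q2) :=
            half_lt_self (by
              obtain ⟨h1, h2⟩ := Finset.mem_Ico.1 hm
              exact lt_min (dist_pos.2 (hfib1 m h1 h2).1) (dist_pos.2 (hfib1 m h1 h2).2))
        _ ≤ dist (f^[m] s1) q1 := min_le_left _ _
    · intro hball
      rw [Metric.mem_closedBall, dist_comm] at hball
      refine absurd hball (not_le.2 ?_)
      calc ρ2 m < min (dist (f^[m] s2) q1) (dist (f^[m] s2) q2) :=
            half_lt_self (by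
              obtain ⟨h1, h2⟩ := Finset.mem_Ico.1 hm
              exact lt_min (dist_pos.2 (hfib2 m h1 h2).1) (dist_pos.2 (hfib2 m h1 h2).2))
        _ ≤ dist (f^[m] s2) q1 := min_le_left _ _
  have hq2Q2 : q2 ∈ Q2 := by
    refine ⟨⟨hq2W, Set.mem_biInter fun m hm => ⟨?_, ?_⟩⟩, Set.mem_biInter fun m hm => ⟨?_, ?_⟩⟩
    · intro hball
      exact absurd (Metric.mem_closedBall.1 hball)
        (not_le.2 (lt_of_lt_of_le (hσ1lt m hm) (min_le_right _ _)))
    · intro hball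
      exact absurd (Metric.mem_closedBall.1 hball)
        (not_le.2 (lt_of_lt_of_le (hσ2lt m hm) (min_le_right _ _)))
    · intro hball
      rw [Metric.mem_closedBall, dist_comm] at hball
      refine absurd hball (not_le.2 ?_)
      calc ρ1 m < min (dist (f^[m] s1) q1) (dist (f^[m] s1) q2) :=
            half_lt_self (by
              obtain ⟨h1, h2⟩ := Finset.mem_Ico.1 hm
              exact lt_min (dist_pos.2 (hfib1 m h1 h2).1) (dist_pos.2 (hfib1 m h1 h2).2))
        _ ≤ dist (f^[m] s1) q2 := min_le_right _ _
    · intro hball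
      rw [Metric.mem_closedBall, dist_comm] at hball
      refine absurd hball (not_le.2 ?_)
      calc ρ2 m < min (dist (f^[m] s2) q1) (dist (f^[m] s2) q2) :=
            half_lt_self (by
              obtain ⟨h1, h2⟩ := Finset.mem_Ico.1 hm
              exact lt_min (dist_pos.2 (hfib2 m h1 h2).1) (dist_pos.2 (hfib2 m h1 h2).2))
        _ ≤ dist (f^[m] s2) q2 := min_le_right _ _
  -- absorption: points of W1 ∪ W2 are in A at time j and then synchronized pairs
  -- can never lie in C1 × C2
  have hWA : ∀ x, x ∈ W1 ∪ W2 → f^[j] x ∈ A := by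
    rintro x (hx | hx)
    exacts [hx.2, hx.2]
  have habs : ∀ x y, x ∈ W1 ∪ W2 → y ∈ W1 ∪ W2 → ∀ m, j ≤ m →
      f^[m] x ∈ C1 → f^[m] y ∈ C2 → False := by
    intro x y hx hy m hm h1 h2
    have hx' : f^[m - j] (f^[j] x) ∈ C1 := by
      rwa [← Function.iterate_add_apply, Nat.sub_add_cancel hm]
    have hy' : f^[m - j] (f^[j] y) ∈ C2 := by
      rwa [← Function.iterate_add_apply, Nat.sub_add_cancel hm]
    exact H' (m - j) _ _ (hWA x hx) (hWA y hy) hx' hy'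
  -- the contradiction pair in the hyperspace
  obtain ⟨k, hk⟩ := hZ (VTwoS Q1 Q2 n) (VTwoS S1 S2 n) (isOpen_vtwo hQ1open hQ2open)
    (isOpen_vtwo hS1open hS2open) ⟨_, pair_mem_vtwo hq1Q1 hq2Q2 hn⟩
    ⟨_, pair_mem_vtwo hs1S1 hs2S2 hn⟩
  have hQ1W : Q1 ⊆ W1 ∪ W2 := fun x hx => Or.inl hx.1.1
  have hQ2W : Q2 ⊆ W1 ∪ W2 := fun x hx => Or.inr hx.1.1
  have hS1W : S1 ⊆ W1 ∪ W2 := fun x hx => Or.inl hx.1.1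
  have hS2W : S2 ⊆ W1 ∪ W2 := fun x hx => Or.inr hx.1.1
  have hS1C : S1 ⊆ C1 := fun x hx => hx.1.1.1
  have hS2C : S2 ⊆ C2 := fun x hx => hx.1.1.1
  have hQ1C : Q1 ⊆ C1 := fun x hx => hx.1.1.1
  have hQ2C : Q2 ⊆ C2 := fun x hx => hx.1.1.1
  rcases le_or_gt 0 k with h0 | h0
  · rw [ziter_nonneg _ _ h0] at hk
    obtain ⟨E, ⟨D, hD, rfl⟩, hDF⟩ := hk
    set t := k.toNat with htdef
    obtain ⟨hDsub, _, _⟩ := hD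
    have hDF' := hDF
    unfold VTwoS at hDF'
    obtain ⟨_, hm1, hm2⟩ :
        (((FnMap X n f)^[t] D).1 : Set X) ⊆ S1 ∪ S2 ∧
        ((((FnMap X n f)^[t] D).1 : Set X) ∩ S1).Nonempty ∧
        ((((FnMap X n f)^[t] D).1 : Set X) ∩ S2).Nonempty := hDF'
    rw [fnMap_iterate_coe] at hm1 hm2
    obtain ⟨y1, ⟨e1, he1, rfl⟩, hy1⟩ := hm1
    obtain ⟨y2, ⟨e2, he2, rfl⟩, hy2⟩ := hm2
    have he1' : e1 ∈ Q1 ∪ Q2 := hDsub he1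
    have he2' : e2 ∈ Q1 ∪ Q2 := hDsub he2
    rcases lt_or_ge t j with hlt | hge
    · have hmid : f^[t] e1 ∈ (Metric.closedBall s1 σ1)ᶜ ∩ (Metric.closedBall s2 σ2)ᶜ := by
        rcases he1' with hq | hq
        · exact Set.mem_iInter₂.1 hq.1.2 t (Finset.mem_range.2 hlt)
        · exact Set.mem_iInter₂.1 hq.1.2 t (Finset.mem_range.2 hlt)
      exact hmid.1 (Metric.ball_subset_closedBall hy1.1.2)
    · exact habs e1 e2 (Or.elim he1' (fun h => hQ1W h) (fun h => hQ2W h))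
        (Or.elim he2' (fun h => hQ1W h) (fun h => hQ2W h)) t hge
        (hS1C hy1) (hS2C hy2)
  · rw [ziter_neg _ _ (not_le.2 h0)] at hk
    obtain ⟨D, hDE, hDF⟩ := hk
    set m := (-k).toNat with hmdef
    have hmpos : 0 < m := by
      simp only [hmdef]
      omega
    obtain ⟨hDsub, _, _⟩ := hDF
    have hDE' := hDE
    unfold VTwoS at hDE'
    obtain ⟨_, hm1, hm2⟩ :
        (((FnMap X n f)^[m] D).1 : Set X) ⊆ Q1 ∪ Q2 ∧
        ((((FnMap X n f)^[m] D).1 : Set X) ∩ Q1).Nonempty ∧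
        ((((FnMap X n f)^[m] D).1 : Set X) ∩ Q2).Nonempty := hDE'
    rw [fnMap_iterate_coe] at hm1 hm2
    obtain ⟨y1, ⟨e1, he1, rfl⟩, hy1⟩ := hm1
    obtain ⟨y2, ⟨e2, he2, rfl⟩, hy2⟩ := hm2
    have he1' : e1 ∈ S1 ∪ S2 := hDsub he1
    have he2' : e2 ∈ S1 ∪ S2 := hDsub he2
    rcases lt_or_ge m j with hlt | hge
    · have hmm : m ∈ Finset.Ico 1 j := Finset.mem_Ico.2 ⟨hmpos, hlt⟩
      rcases he1' with hs | hs
      · have hin : f^[m] e1 ∈ Metric.ball (f^[m] s1) (ρ1 m) :=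
          Set.mem_iInter₂.1 hs.2 m hmm
        have hout : f^[m] e1 ∈ (Metric.closedBall (f^[m] s1) (ρ1 m))ᶜ :=
          (Set.mem_iInter₂.1 hy1.2 m hmm).1
        exact hout (Metric.ball_subset_closedBall hin)
      · have hin : f^[m] e1 ∈ Metric.ball (f^[m] s2) (ρ2 m) :=
          Set.mem_iInter₂.1 hs.2 m hmm
        have hout : f^[m] e1 ∈ (Metric.closedBall (f^[m] s2) (ρ2 m))ᶜ :=
          (Set.mem_iInter₂.1 hy1.2 m hmm).2
        exact hout (Metric.ball_subset_closedBall hin)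
    · exact habs e1 e2 (Or.elim he1' (fun h => hS1W h) (fun h => hS2W h))
        (Or.elim he2' (fun h => hS1W h) (fun h => hS2W h)) m hge
        (hQ1C hy1) (hQ2C hy2)


lemma disjointify {U V : Set X} (hU : IsOpen U) (hV : IsOpen V) (hUne : U.Nonempty)
    (hVne : V.Nonempty) :
    ∃ U' V' : Set X, IsOpen U' ∧ IsOpen V' ∧ U'.Nonempty ∧ V'.Nonempty ∧
      U' ⊆ U ∧ V' ⊆ V ∧ ∀ x, x ∈ U' → x ∉ V' := by
  obtain ⟨x, hx⟩ := hUne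
  obtain ⟨y, hyV, hyx⟩ := exists_mem_open_notMem hV hVne (Set.countable_singleton x)
  have hne : x ≠ y := fun h => hyx (by simp [h])
  have hpos : 0 < dist x y := dist_pos.2 hne
  refine ⟨U ∩ Metric.ball x (dist x y / 2), V ∩ Metric.ball y (dist x y / 2),
    hU.inter Metric.isOpen_ball, hV.inter Metric.isOpen_ball,
    ⟨x, hx, Metric.mem_ball_self (by linarith)⟩, ⟨y, hyV, Metric.mem_ball_self (by linarith)⟩,
    Set.inter_subset_left, Set.inter_subset_left, ?_⟩
  intro z hzU hzV
  have h1 : dist z x < dist x y / 2 := Metric.mem_ball.1 hzU.2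
  have h2 : dist z y < dist x y / 2 := Metric.mem_ball.1 hzV.2
  have := dist_triangle x z y
  rw [dist_comm x z] at this
  linarith

/-- The hard direction: ℤ-transitivity of the induced map implies weak mixing. -/
lemma toWM {f : X → X} (hf : Continuous f) (hn : 2 ≤ n)
    (hZ : ZTransitive (FnMap X n f)) : WeaklyMixing f := by
  intro U1 U2 V1 V2 hU1 hU2 hV1 hV2 hU1n hU2n hV1n hV2n
  obtain ⟨U1', V1', hU1'o, hV1'o, hU1'n, hV1'n, hU1's, hV1's, hdisj1⟩ :=
    disjointify hU1 hV1 hU1n hV1n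
  obtain ⟨U2', V2', hU2'o, hV2'o, hU2'n, hV2'n, hU2's, hV2's, _⟩ :=
    disjointify hU2 hV2 hU2n hV2n
  obtain ⟨k1, h1, h2⟩ := starProp hf hn hZ U1' U2' V2' hU1'o hU2'o hV2'o hU1'n hU2'n hV2'n
  obtain ⟨y1, ⟨x1, hx1, rfl⟩, hy1⟩ := h1
  obtain ⟨y2, ⟨x2, hx2, rfl⟩, hy2⟩ := h2
  set U' : Set X := U1' ∩ f^[k1] ⁻¹' U2' with hU'def
  set U'' : Set X := U1' ∩ f^[k1] ⁻¹' V2' with hU''def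
  have hU'o : IsOpen U' := hU1'o.inter (IsOpen.preimage (hf.iterate k1) hU2'o)
  have hU''o : IsOpen U'' := hU1'o.inter (IsOpen.preimage (hf.iterate k1) hV2'o)
  obtain ⟨k2, g1, g2⟩ := starProp hf hn hZ U' U'' V1' hU'o hU''o hV1'o
    ⟨x1, hx1, hy1⟩ ⟨x2, hx2, hy2⟩ hV1'n
  obtain ⟨z1, ⟨w1, hw1, rfl⟩, hz1⟩ := g1
  obtain ⟨z2, ⟨w2, hw2, rfl⟩, hz2⟩ := g2
  have hk2pos : 0 < k2 := by
    rcases Nat.eq_zero_or_pos k2 with h0 | h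
    · subst h0
      simp only [Function.iterate_zero_apply] at hz2
      exact absurd hz2 (hdisj1 w2 hw2.1)
    · exact h
  refine ⟨k2, hk2pos, ⟨f^[k2] w2, ⟨w2, hU1's hw2.1, rfl⟩, hV1's hz2⟩, ?_⟩
  refine ⟨f^[k2] (f^[k1] w1), ⟨f^[k1] w1, hU2's hw1.2, rfl⟩, ?_⟩
  have hcomm : f^[k2] (f^[k1] w1) = f^[k1] (f^[k2] w1) := by
    rw [← Function.iterate_add_apply, ← Function.iterate_add_apply, Nat.add_comm]
  rw [hcomm]
  exact hV2's hz1.2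

end LemZ

section Back

variable [Nontrivial X]

lemma dominating {f : X → X} (hf : Continuous f) (hwm : WeaklyMixing f) :
    ∀ L : List (Set X × Set X),
      (∀ p ∈ L, IsOpen p.1 ∧ p.1.Nonempty ∧ IsOpen p.2 ∧ p.2.Nonempty) →
      ∃ U V : Set X, IsOpen U ∧ U.Nonempty ∧ IsOpen V ∧ V.Nonempty ∧
        ∀ k : ℕ, (f^[k] '' U ∩ V).Nonempty → ∀ p ∈ L, (f^[k] '' p.1 ∩ p.2).Nonempty := by
  intro L
  induction L with
  | nil =>
      exact fun _ => ⟨Set.univ, Set.univ, isOpen_univ, Set.univ_nonempty, isOpen_univ,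
        Set.univ_nonempty, fun k _ p hp => absurd hp List.not_mem_nil⟩
  | cons p L ih =>
      intro hL
      obtain ⟨U2, V2, hU2o, hU2n, hV2o, hV2n, hdom⟩ :=
        ih (fun q hq => hL q (List.mem_cons_of_mem p hq))
      obtain ⟨hp1o, hp1n, hp2o, hp2n⟩ := hL p (List.mem_cons_self)
      obtain ⟨k₀, _, hA, hB⟩ := hwm p.1 p.2 U2 V2 hp1o hp2o hU2o hV2o hp1n hp2n hU2n hV2n
      obtain ⟨a, ⟨xa, hxa, rfl⟩, haU2⟩ := hA
      obtain ⟨b, ⟨xb, hxb, rfl⟩, hbV2⟩ := hB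
      refine ⟨p.1 ∩ f^[k₀] ⁻¹' U2, p.2 ∩ f^[k₀] ⁻¹' V2,
        hp1o.inter (IsOpen.preimage (hf.iterate k₀) hU2o), ⟨xa, hxa, haU2⟩,
        hp2o.inter (IsOpen.preimage (hf.iterate k₀) hV2o), ⟨xb, hxb, hbV2⟩, ?_⟩
      intro k hk q hq
      obtain ⟨y, ⟨x, hx, rfl⟩, hy⟩ := hk
      rcases List.mem_cons.1 hq with rfl | hq'
      · exact ⟨f^[k] x, ⟨x, hx.1, rfl⟩, hy.1⟩
      · refine hdom k ⟨f^[k] (f^[k₀] x), ⟨f^[k₀] x, hx.2, rfl⟩, ?_⟩ q hq'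
        have hcomm : f^[k] (f^[k₀] x) = f^[k₀] (f^[k] x) := by
          rw [← Function.iterate_add_apply, ← Function.iterate_add_apply, Nat.add_comm]
        rw [hcomm]
        exact hy.2

lemma furstenberg {f : X → X} (hf : Continuous f) (hwm : WeaklyMixing f)
    (L : List (Set X × Set X))
    (hL : ∀ p ∈ L, IsOpen p.1 ∧ p.1.Nonempty ∧ IsOpen p.2 ∧ p.2.Nonempty) :
    ∃ k : ℕ, 0 < k ∧ ∀ p ∈ L, (f^[k] '' p.1 ∩ p.2).Nonempty := by
  obtain ⟨U, V, hUo, hUn, hVo, hVn, hdom⟩ := dominating hf hwm L hL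
  obtain ⟨k, hkpos, h1, _⟩ := hwm U U V V hUo hUo hVo hVo hUn hUn hVn hVn
  exact ⟨k, hkpos, hdom k h1⟩

lemma exists_range_eq {S : Set X} (hS : S.Finite) (hne : S.Nonempty) (hcard : S.ncard ≤ n)
    (hn : 0 < n) : ∃ g : Fin n → X, Set.range g = S := by
  classical
  have hcA : hS.toFinset.card ≤ n := by
    rw [← Set.ncard_eq_toFinset_card S hS]
    exact hcard
  obtain ⟨x₀, hx₀⟩ := hne
  refine ⟨fun i => if h : (i : ℕ) < hS.toFinset.card
    then ((hS.toFinset.equivFin.symm ⟨(i : ℕ), h⟩ : hS.toFinset) : X) else x₀, ?_⟩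
  ext a
  constructor
  · rintro ⟨i, rfl⟩
    by_cases h : (i : ℕ) < hS.toFinset.card
    · simp only [dif_pos h]
      have hmem := (hS.toFinset.equivFin.symm ⟨(i : ℕ), h⟩).2
      rwa [Set.Finite.mem_toFinset] at hmem
    · simpa [dif_neg h] using hx₀
  · intro ha
    have hat : a ∈ hS.toFinset := (Set.Finite.mem_toFinset hS).2 ha
    refine ⟨⟨((hS.toFinset.equivFin ⟨a, hat⟩ : Fin hS.toFinset.card) : ℕ),
      lt_of_lt_of_le (hS.toFinset.equivFin ⟨a, hat⟩).2 hcA⟩, ?_⟩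
    have h : ((⟨((hS.toFinset.equivFin ⟨a, hat⟩ : Fin hS.toFinset.card) : ℕ),
        lt_of_lt_of_le (hS.toFinset.equivFin ⟨a, hat⟩).2 hcA⟩ : Fin n) : ℕ) <
        hS.toFinset.card := (hS.toFinset.equivFin ⟨a, hat⟩).2
    simp only [dif_pos h]
    have heq : (⟨((⟨((hS.toFinset.equivFin ⟨a, hat⟩ : Fin hS.toFinset.card) : ℕ),
        lt_of_lt_of_le (hS.toFinset.equivFin ⟨a, hat⟩).2 hcA⟩ : Fin n) : ℕ), h⟩ :
        Fin hS.toFinset.card) = hS.toFinset.equivFin ⟨a, hat⟩ := Fin.ext rfl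
    rw [heq, Equiv.symm_apply_apply]

/-- The easy direction: weak mixing implies ℤ-transitivity of the induced map. -/
lemma fromWM {f : X → X} (hf : Continuous f) (hn : 2 ≤ n) (hwm : WeaklyMixing f) :
    ZTransitive (FnMap X n f) := by
  rintro 𝒰 𝒱 h𝒰 h𝒱 ⟨A, hA⟩ ⟨B, hB⟩
  obtain ⟨εA, hεA, hballA⟩ := Metric.isOpen_iff.1 h𝒰 A hA
  obtain ⟨εB, hεB, hballB⟩ := Metric.isOpen_iff.1 h𝒱 B hB
  set r : ℝ := min εA εB / 2 with hrdef
  have hrpos : 0 < r := by positivity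
  have hn0 : 0 < n := lt_of_lt_of_le two_pos hn
  have : Nonempty (Fin n) := Fin.pos_iff_nonempty.1 hn0
  obtain ⟨σ, hσ⟩ := exists_range_eq A.2.1 A.1.nonempty A.2.2 hn0
  obtain ⟨τ, hτ⟩ := exists_range_eq B.2.1 B.1.nonempty B.2.2 hn0
  set L : List (Set X × Set X) := (List.finRange n).map
    (fun i => (Metric.ball (σ i) r, Metric.ball (τ i) r)) with hLdef
  have hLcond : ∀ p ∈ L, IsOpen p.1 ∧ p.1.Nonempty ∧ IsOpen p.2 ∧ p.2.Nonempty := by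
    intro p hp
    obtain ⟨i, _, rfl⟩ := List.mem_map.1 hp
    exact ⟨Metric.isOpen_ball, ⟨σ i, Metric.mem_ball_self hrpos⟩, Metric.isOpen_ball,
      ⟨τ i, Metric.mem_ball_self hrpos⟩⟩
  obtain ⟨k, hkpos, hkall⟩ := furstenberg hf hwm L hLcond
  have hkall' : ∀ i : Fin n, ∃ x, x ∈ Metric.ball (σ i) r ∧ f^[k] x ∈ Metric.ball (τ i) r := by
    intro i
    have hmem : (Metric.ball (σ i) r, Metric.ball (τ i) r) ∈ L := by
      rw [hLdef]
      exact List.mem_map_of_mem (List.mem_finRange i)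
    obtain ⟨y, ⟨x, hx, rfl⟩, hy⟩ := hkall _ hmem
    exact ⟨x, hx, hy⟩
  choose x hx1 hx2 using hkall'
  have hfin : (Set.range x).Finite := Set.finite_range x
  have hne : (Set.range x).Nonempty := Set.range_nonempty x
  have hcard : (Set.range x).ncard ≤ n := by
    rw [← Set.image_univ]
    refine le_trans (Set.ncard_image_le Set.finite_univ) ?_
    rw [Set.ncard_univ]
    simp [Nat.card_eq_fintype_card]
  set A' : Fn X n := elem (Set.range x) hfin hne hcard with hA'def
  have hrlt : ∀ ε, (min εA εB ≤ ε) → r < ε := fun ε hε =>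
    lt_of_lt_of_le (half_lt_self (lt_min hεA hεB)) hε
  have hdA : dist A' A ≤ r := by
    rw [fn_dist_eq]
    have hcoe : ((A'.1 : Set X)) = Set.range x := rfl
    rw [hcoe, ← hσ]
    refine Metric.hausdorffDist_le_of_mem_dist (le_of_lt hrpos) ?_ ?_
    · rintro z ⟨i, rfl⟩
      exact ⟨σ i, ⟨i, rfl⟩, le_of_lt (Metric.mem_ball.1 (hx1 i))⟩
    · rintro z ⟨i, rfl⟩
      refine ⟨x i, ⟨i, rfl⟩, le_of_lt ?_⟩
      have := Metric.mem_ball.1 (hx1 i)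
      rwa [dist_comm] at this
  have hA'mem : A' ∈ 𝒰 :=
    hballA (Metric.mem_ball.2 (lt_of_le_of_lt hdA (hrlt εA (min_le_left _ _))))
  set E : Fn X n := (FnMap X n f)^[k] A' with hEdef
  have hEcoe : ((E.1 : Set X)) = Set.range (fun i => f^[k] (x i)) := by
    rw [hEdef, fnMap_iterate_coe]
    have hcoe : ((A'.1 : Set X)) = Set.range x := rfl
    rw [hcoe, ← Set.range_comp]
    rfl
  have hdB : dist E B ≤ r := by
    rw [fn_dist_eq, hEcoe, ← hτ]
    refine Metric.hausdorffDist_le_of_mem_dist (le_of_lt hrpos) ?_ ?_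
    · rintro z ⟨i, rfl⟩
      exact ⟨τ i, ⟨i, rfl⟩, le_of_lt (Metric.mem_ball.1 (hx2 i))⟩
    · rintro z ⟨i, rfl⟩
      refine ⟨f^[k] (x i), ⟨i, rfl⟩, le_of_lt ?_⟩
      have := Metric.mem_ball.1 (hx2 i)
      rwa [dist_comm] at this
  have hEmem : E ∈ 𝒱 :=
    hballB (Metric.mem_ball.2 (lt_of_le_of_lt hdB (hrlt εB (min_le_right _ _))))
  refine ⟨(k : ℤ), ?_⟩
  rw [ziter_nonneg _ _ (Int.natCast_nonneg k)]
  refine ⟨E, ⟨A', hA'mem, ?_⟩, hEmem⟩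
  have hk' : ((k : ℤ)).toNat = k := Int.toNat_natCast k
  rw [hEdef, hk']

end Back

end Stmt4Aux

theorem stmt4 (X : Type*) [MetricSpace X] [CompactSpace X] [ConnectedSpace X] [Nontrivial X]
    (n : ℕ) (hn : 2 ≤ n) (f : X → X) (hf : Continuous f) :
    ZTransitive (FnMap X n f) ↔ WeaklyMixing f := by
  exact ⟨Stmt4Aux.toWM hf hn, Stmt4Aux.fromWM hf hn⟩
end

section
/- Let X be a continuum (a compact connected metric space with more than one point), let n ≥ 2 be an integer, and let f : X → X be a continuous map. Then F_n(f) is indecomposable if and only if SF_n(f) is indecomposable; moreover, if F_n(f) is indecomposable, then f is indecomposable. -/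
open Metric Set TopologicalSpace

variable (X : Type*) [MetricSpace X] (n : ℕ)

/-- `g` is indecomposable: any two closed `+invariant` sets with nonempty interior
have intersection with nonempty interior. -/
def Indecomposable' {Z : Type*} [TopologicalSpace Z] (g : Z → Z) : Prop :=
  ∀ A B : Set Z, IsClosed A → IsClosed B → g '' A ⊆ A → g '' B ⊆ B →
    (interior A).Nonempty → (interior B).Nonempty → (interior (A ∩ B)).Nonempty

namespace Stmt7Aux

variable {X : Type*} [MetricSpace X] {n : ℕ}

lemma Fn.dist_eq' (A B : Fn X n) :
    dist A B = Metric.hausdorffDist (A.1 : Set X) (B.1 : Set X) := by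
  rw [Subtype.dist_eq, NonemptyCompacts.dist_eq]

lemma Fn.edist_ne_top (A B : Fn X n) :
    EMetric.hausdorffEdist (A.1 : Set X) (B.1 : Set X) ≠ ⊤ :=
  Metric.hausdorffEdist_ne_top_of_nonempty_of_bounded A.1.nonempty B.1.nonempty
    A.1.isCompact.isBounded B.1.isCompact.isBounded

lemma hq : Topology.IsQuotientMap (SFnQ X n) := isQuotientMap_quot_mk

lemma SFnQ_eq_iff {A B : Fn X n} :
    SFnQ X n A = SFnQ X n B ↔ A = B ∨ (A ∈ F1 X n ∧ B ∈ F1 X n) :=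
  Quotient.eq

lemma preimage_image_q (S : Set (Fn X n)) :
    SFnQ X n ⁻¹' (SFnQ X n '' S) ⊆ S ∪ F1 X n := by
  rintro B ⟨C, hC, hqC⟩
  rcases SFnQ_eq_iff.1 hqC.symm with rfl | ⟨hB, _⟩
  · exact Or.inl hC
  · exact Or.inr hB

lemma preimage_image_q_of_disjoint {V : Set (Fn X n)} (hV : V ∩ F1 X n = ∅) :
    SFnQ X n ⁻¹' (SFnQ X n '' V) = V := by
  refine Subset.antisymm ?_ (Set.subset_preimage_image _ _)
  rintro B ⟨C, hC, hqC⟩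
  rcases SFnQ_eq_iff.1 hqC.symm with rfl | ⟨_, hC1⟩
  · exact hC
  · exact absurd (Set.mem_inter hC hC1) (by simp [hV])

/-- The singleton embedding `X → Fn X n`. -/
noncomputable def sing (hn : 1 ≤ n) (x : X) : Fn X n :=
  ⟨⟨⟨{x}, isCompact_singleton⟩, ⟨x, rfl⟩⟩, Set.finite_singleton x, (Set.ncard_singleton x).trans_le hn⟩

lemma sing_coe (hn : 1 ≤ n) (x : X) : ((sing hn x).1 : Set X) = {x} := rfl

lemma lipschitz_sing (hn : 1 ≤ n) : LipschitzWith 1 (sing (X := X) (n := n) hn) := by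
  refine LipschitzWith.of_dist_le_mul fun x y => ?_
  rw [NNReal.coe_one, one_mul, Fn.dist_eq', sing_coe, sing_coe]
  refine Metric.hausdorffDist_le_of_mem_dist dist_nonneg ?_ ?_
  · rintro z rfl; exact ⟨y, rfl, le_rfl⟩
  · rintro z rfl; exact ⟨x, rfl, le_of_eq (dist_comm z x)⟩

lemma F1_eq_range (hn : 1 ≤ n) : F1 X n = Set.range (sing (X := X) (n := n) hn) := by
  ext A
  constructor
  · rintro ⟨x, hx⟩
    exact ⟨x, Subtype.ext (NonemptyCompacts.ext hx.symm)⟩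
  · rintro ⟨x, rfl⟩
    exact ⟨x, rfl⟩

lemma isClosed_F1 [CompactSpace X] (hn : 1 ≤ n) : IsClosed (F1 X n) := by
  rw [F1_eq_range hn]
  exact (isCompact_range (lipschitz_sing hn).continuous).isClosed

lemma interior_F1_empty [ConnectedSpace X] [Nontrivial X] (hn : 2 ≤ n) :
    interior (F1 X n) = (∅ : Set (Fn X n)) := by
  by_contra h
  obtain ⟨A, hA⟩ := Set.nonempty_iff_ne_empty.2 h
  obtain ⟨ε, hε, hball⟩ := Metric.isOpen_iff.1 isOpen_interior A hA
  obtain ⟨x, hx⟩ := interior_subset hA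
  -- find y ≠ x with dist x y < ε
  have hy : ∃ y : X, y ≠ x ∧ dist x y < ε := by
    by_contra hc
    push_neg at hc
    have hb : Metric.ball x ε ⊆ {x} := by
      intro y hy
      by_contra hyx
      rw [Set.mem_singleton_iff] at hyx
      rw [Metric.mem_ball, dist_comm] at hy
      exact absurd hy (not_lt.2 (hc y hyx))
    have hcl : IsClopen ({x} : Set X) := ⟨isClosed_singleton, by
      have hxe : Metric.ball x ε = {x} :=
        Subset.antisymm hb (fun w hw => by
          rw [Set.mem_singleton_iff] at hw; subst hw; exact Metric.mem_ball_self hε)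
      rw [← hxe]; exact Metric.isOpen_ball⟩
    obtain ⟨z, hz⟩ := exists_ne x
    rcases isClopen_iff.1 hcl with h1 | h1
    · exact absurd h1 (Set.singleton_ne_empty x)
    · have : z ∈ ({x} : Set X) := h1.symm ▸ Set.mem_univ z
      exact hz (by simpa using this)
  obtain ⟨y, hyx, hxy⟩ := hy
  have hfin' : ({x, y} : Set X).Finite := Set.toFinite _
  have hcard2 : ({x, y} : Set X).ncard ≤ n := by
    rw [Set.ncard_pair (Ne.symm hyx)]; exact hn
  set B : Fn X n := ⟨⟨⟨{x, y}, hfin'.isCompact⟩, ⟨x, by simp⟩⟩, hfin', hcard2⟩ with hB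
  have hdist : dist A B < ε := by
    rw [Fn.dist_eq', hx]
    calc Metric.hausdorffDist ({x} : Set X) ({x, y} : Set X) ≤ dist x y := by
          refine Metric.hausdorffDist_le_of_mem_dist dist_nonneg ?_ ?_
          · intro z hz
            rw [Set.mem_singleton_iff] at hz
            refine ⟨x, by simp, ?_⟩
            rw [hz]
            simpa using dist_nonneg
          · intro w hw
            simp only [Set.mem_insert_iff, Set.mem_singleton_iff] at hw
            rcases hw with h1 | h1
            · refine ⟨x, rfl, ?_⟩; rw [h1]; simpa using dist_nonneg
            · refine ⟨x, rfl, ?_⟩; rw [h1]; exact le_of_eq (dist_comm y x)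
      _ < ε := hxy
  have hBF1 : B ∈ F1 X n :=
    interior_subset (hball (Metric.mem_ball'.2 hdist))
  obtain ⟨z, hz⟩ := hBF1
  have hxz : x ∈ ({z} : Set X) := hz ▸ (by simp : x ∈ ({x, y} : Set X))
  have hyz : y ∈ ({z} : Set X) := hz ▸ (by simp : y ∈ ({x, y} : Set X))
  simp only [Set.mem_singleton_iff] at hxz hyz
  exact hyx (hyz.trans hxz.symm)

lemma SFnMap_mk (f : X → X) (A : Fn X n) :
    SFnMap X n f (SFnQ X n A) = SFnQ X n (FnMap X n f A) := rfl

/-- The set of elements of `Fn X n` contained in `A`. -/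
def hat (A : Set X) : Set (Fn X n) := {C | (C.1 : Set X) ⊆ A}

lemma isClosed_hat {A : Set X} (hA : IsClosed A) : IsClosed (hat (n := n) A) := by
  rw [← isOpen_compl_iff] at hA ⊢
  rw [Metric.isOpen_iff] at hA ⊢
  intro C hC
  simp only [mem_compl_iff, hat, mem_setOf_eq, Set.not_subset] at hC
  obtain ⟨x, hxC, hxA⟩ := hC
  obtain ⟨ε, hε, hball⟩ := hA x hxA
  refine ⟨ε, hε, fun D hD => ?_⟩
  rw [Metric.mem_ball, Fn.dist_eq'] at hD
  obtain ⟨y, hyD, hxy⟩ := Metric.exists_dist_lt_of_hausdorffDist_lt' hxC hD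
    (Fn.edist_ne_top D C)
  intro hDA
  exact hball (Metric.mem_ball.2 hxy) (hDA hyD)

lemma hat_invariant {A : Set X} {f : X → X} (hfA : f '' A ⊆ A) :
    FnMap X n f '' hat A ⊆ hat A := by
  rintro _ ⟨C, hC, rfl⟩
  exact fun y hy => by
    obtain ⟨x, hxC, rfl⟩ := hy
    exact hfA ⟨x, hC hxC, rfl⟩

lemma ball_sing_subset_hat (hn : 1 ≤ n) {x : X} {ε : ℝ} {A : Set X}
    (h : Metric.ball x ε ⊆ A) : Metric.ball (sing (n := n) hn x) ε ⊆ hat A := by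
  intro D hD
  rw [Metric.mem_ball, Fn.dist_eq', sing_coe] at hD
  intro y hy
  obtain ⟨z, hz, hdz⟩ := Metric.exists_dist_lt_of_hausdorffDist_lt hy hD
    (Fn.edist_ne_top D (sing hn x))
  rw [Set.mem_singleton_iff] at hz
  rw [hz] at hdz
  exact h (Metric.mem_ball.2 hdz)

end Stmt7Aux

open Stmt7Aux in
theorem stmt7 (X : Type*) [MetricSpace X] [CompactSpace X] [ConnectedSpace X] [Nontrivial X]
    (n : ℕ) (hn : 2 ≤ n) (f : X → X) (hf : Continuous f) :
    (Indecomposable' (FnMap X n f) ↔ Indecomposable' (SFnMap X n f)) ∧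
    (Indecomposable' (FnMap X n f) → Indecomposable' f) := by
  have hn1 : 1 ≤ n := le_trans one_le_two hn
  have hF1closed : IsClosed (F1 X n) := isClosed_F1 hn1
  have hF1int : interior (F1 X n) = ∅ := interior_F1_empty hn
  have hqc : Continuous (SFnQ X n) := hq.continuous
  have hqs : Function.Surjective (SFnQ X n) := hq.surjective
  constructor
  · constructor
    · -- Fn indecomposable → SFn indecomposable
      intro hFn A B hAc hBc hAi hBi hAint hBint
      set A' := SFnQ X n ⁻¹' A with hA'
      set B' := SFnQ X n ⁻¹' B with hB'
      have hA'c : IsClosed A' := hAc.preimage hqc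
      have hB'c : IsClosed B' := hBc.preimage hqc
      have hA'i : FnMap X n f '' A' ⊆ A' := by
        rintro _ ⟨C, hC, rfl⟩
        show SFnQ X n (FnMap X n f C) ∈ A
        rw [← SFnMap_mk]
        exact hAi ⟨SFnQ X n C, hC, rfl⟩
      have hB'i : FnMap X n f '' B' ⊆ B' := by
        rintro _ ⟨C, hC, rfl⟩
        show SFnQ X n (FnMap X n f C) ∈ B
        rw [← SFnMap_mk]
        exact hBi ⟨SFnQ X n C, hC, rfl⟩
      have hA'int : (interior A').Nonempty := by
        obtain ⟨a, ha⟩ := hAint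
        obtain ⟨C, hC⟩ := hqs a
        exact ⟨C, (isOpen_interior.preimage hqc).subset_interior_iff.2
          (Set.preimage_mono interior_subset) (by simp [hC, ha])⟩
      have hB'int : (interior B').Nonempty := by
        obtain ⟨b, hb⟩ := hBint
        obtain ⟨C, hC⟩ := hqs b
        exact ⟨C, (isOpen_interior.preimage hqc).subset_interior_iff.2
          (Set.preimage_mono interior_subset) (by simp [hC, hb])⟩
      obtain ⟨C, hC⟩ := hFn A' B' hA'c hB'c hA'i hB'i hA'int hB'int
      -- W := interior (A' ∩ B'), pass through quotient avoiding F1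
      set W := interior (A' ∩ B') with hW
      have hWopen : IsOpen W := isOpen_interior
      set V := W \ F1 X n with hV
      have hVopen : IsOpen V := hWopen.sdiff hF1closed
      have hVne : V.Nonempty := by
        rw [Set.diff_nonempty]
        intro hsub
        have h2 : W ⊆ interior (F1 X n) := hWopen.subset_interior_iff.2 hsub
        rw [hF1int] at h2
        exact absurd (h2 hC) (Set.notMem_empty C)
      have hVdisj : V ∩ F1 X n = ∅ := Set.diff_inter_self
      have hqVopen : IsOpen (SFnQ X n '' V) := by
        rw [← hq.isOpen_preimage, preimage_image_q_of_disjoint hVdisj]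
        exact hVopen
      have hqVsub : SFnQ X n '' V ⊆ A ∩ B := by
        rintro _ ⟨z, hz, rfl⟩
        have : z ∈ A' ∩ B' := interior_subset hz.1
        exact ⟨this.1, this.2⟩
      obtain ⟨z, hz⟩ := hVne
      exact ⟨SFnQ X n z, hqVopen.subset_interior_iff.2 hqVsub ⟨z, hz, rfl⟩⟩
    · -- SFn indecomposable → Fn indecomposable
      intro hSFn A B hAc hBc hAi hBi hAint hBint
      -- images under q
      have key : ∀ (S : Set (Fn X n)), IsClosed S → IsClosed (SFnQ X n '' S) := by
        intro S hS
        rw [← hq.isClosed_preimage]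
        by_cases h : (S ∩ F1 X n).Nonempty
        · have : SFnQ X n ⁻¹' (SFnQ X n '' S) = S ∪ F1 X n := by
            refine Subset.antisymm (preimage_image_q S) ?_
            rintro z (hz | hz)
            · exact Set.subset_preimage_image _ _ hz
            · obtain ⟨w, hwS, hwF1⟩ := h
              exact ⟨w, hwS, (SFnQ_eq_iff.2 (Or.inr ⟨hwF1, hz⟩))⟩
          rw [this]; exact hS.union hF1closed
        · have : SFnQ X n ⁻¹' (SFnQ X n '' S) = S := by
            refine Subset.antisymm ?_ (Set.subset_preimage_image _ _)
            rintro z ⟨w, hwS, hww⟩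
            rcases SFnQ_eq_iff.1 hww.symm with rfl | ⟨hzF1, hwF1⟩
            · exact hwS
            · exact absurd (⟨w, ⟨hwS, hwF1⟩⟩ : (S ∩ F1 X n).Nonempty) h
          rw [this]; exact hS
      have qint : ∀ (S : Set (Fn X n)), (interior S).Nonempty →
          (interior (SFnQ X n '' S)).Nonempty := by
        intro S hS
        set U := interior S with hU
        set V := U \ F1 X n with hV
        have hVopen : IsOpen V := isOpen_interior.sdiff hF1closed
        have hVne : V.Nonempty := by
          rw [Set.diff_nonempty]
          intro hsub
          have h2 : U ⊆ interior (F1 X n) := isOpen_interior.subset_interior_iff.2 hsub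
          rw [hF1int] at h2
          obtain ⟨u, hu⟩ := hS
          exact absurd (h2 hu) (Set.notMem_empty u)
        have hVdisj : V ∩ F1 X n = ∅ := Set.diff_inter_self
        have hqVopen : IsOpen (SFnQ X n '' V) := by
          rw [← hq.isOpen_preimage, preimage_image_q_of_disjoint hVdisj]
          exact hVopen
        obtain ⟨z, hz⟩ := hVne
        exact ⟨SFnQ X n z, hqVopen.subset_interior_iff.2
          (Set.image_mono (fun w hw => interior_subset hw.1)) ⟨z, hz, rfl⟩⟩
      have qinv : ∀ (S : Set (Fn X n)), FnMap X n f '' S ⊆ S →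
          SFnMap X n f '' (SFnQ X n '' S) ⊆ SFnQ X n '' S := by
        rintro S hS _ ⟨_, ⟨C, hC, rfl⟩, rfl⟩
        rw [SFnMap_mk]
        exact ⟨FnMap X n f C, hS ⟨C, hC, rfl⟩, rfl⟩
      obtain ⟨w, hw⟩ := hSFn (SFnQ X n '' A) (SFnQ X n '' B) (key A hAc) (key B hBc)
        (qinv A hAi) (qinv B hBi) (qint A hAint) (qint B hBint)
      -- pull back
      set W := interior (SFnQ X n '' A ∩ SFnQ X n '' B) with hWdef
      have hWopen : IsOpen (SFnQ X n ⁻¹' W) := isOpen_interior.preimage hqc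
      set P := SFnQ X n ⁻¹' W \ F1 X n with hP
      have hPopen : IsOpen P := hWopen.sdiff hF1closed
      have hPne : P.Nonempty := by
        rw [Set.diff_nonempty]
        intro hsub
        have h2 : SFnQ X n ⁻¹' W ⊆ interior (F1 X n) :=
          hWopen.subset_interior_iff.2 hsub
        rw [hF1int] at h2
        obtain ⟨C, hC⟩ := hqs w
        exact absurd (h2 (by simp [hC, hw])) (Set.notMem_empty C)
      have hPsub : P ⊆ A ∩ B := by
        rintro z ⟨hzW, hzF1⟩
        have hz : SFnQ X n z ∈ SFnQ X n '' A ∩ SFnQ X n '' B := interior_subset hzW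
        constructor
        · rcases preimage_image_q A hz.1 with h | h
          · exact h
          · exact absurd h hzF1
        · rcases preimage_image_q B hz.2 with h | h
          · exact h
          · exact absurd h hzF1
      obtain ⟨z, hz⟩ := hPne
      exact ⟨z, hPopen.subset_interior_iff.2 hPsub hz⟩
  · -- Fn indecomposable → f indecomposable
    intro hFn A B hAc hBc hAi hBi hAint hBint
    have hhatint : ∀ (S : Set X), (interior S).Nonempty →
        (interior (hat (n := n) S)).Nonempty := by
      intro S hS
      obtain ⟨x, hx⟩ := hS
      obtain ⟨ε, hε, hball⟩ := Metric.isOpen_iff.1 isOpen_interior x hx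
      exact ⟨sing hn1 x, Metric.isOpen_ball.subset_interior_iff.2
        (ball_sing_subset_hat hn1 (hball.trans interior_subset))
        (Metric.mem_ball_self hε)⟩
    obtain ⟨C, hC⟩ := hFn (hat A) (hat B) (isClosed_hat hAc) (isClosed_hat hBc)
      (hat_invariant hAi) (hat_invariant hBi) (hhatint A hAint) (hhatint B hBint)
    obtain ⟨ε, hε, hball⟩ := Metric.isOpen_iff.1 isOpen_interior C hC
    obtain ⟨x₁, hx₁⟩ := C.1.nonempty
    -- claim: ball x₁ ε ⊆ A ∩ B
    have hsub : Metric.ball x₁ ε ⊆ A ∩ B := by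
      intro y hy
      rw [Metric.mem_ball, dist_comm] at hy
      -- build D = insert y (C \ {x₁})
      have hfinD : (insert y ((C.1 : Set X) \ {x₁})).Finite := C.2.1.diff.insert y
      have hcard : (insert y ((C.1 : Set X) \ {x₁})).ncard ≤ n := by
        calc (insert y ((C.1 : Set X) \ {x₁})).ncard
            ≤ ((C.1 : Set X) \ {x₁}).ncard + 1 := Set.ncard_insert_le _ _
          _ = (C.1 : Set X).ncard := Set.ncard_diff_singleton_add_one hx₁ C.2.1
          _ ≤ n := C.2.2
      set D : Fn X n := ⟨⟨⟨insert y ((C.1 : Set X) \ {x₁}), hfinD.isCompact⟩,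
        ⟨y, Set.mem_insert y _⟩⟩, hfinD, hcard⟩ with hD
      have hdistD : dist C D < ε := by
        rw [Fn.dist_eq']
        calc Metric.hausdorffDist (C.1 : Set X) (D.1 : Set X) ≤ dist x₁ y := by
              refine Metric.hausdorffDist_le_of_mem_dist (by rw [dist_comm]; exact dist_nonneg) ?_ ?_
              · intro z hz
                by_cases hzx : z = x₁
                · exact ⟨y, Set.mem_insert y _, by rw [hzx]⟩
                · exact ⟨z, Set.mem_insert_of_mem _ ⟨hz, hzx⟩, by simp [dist_nonneg]⟩
              · rintro z (rfl | ⟨hz, _⟩)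
                · exact ⟨x₁, hx₁, le_of_eq (dist_comm z x₁)⟩
                · exact ⟨z, hz, by simp [dist_nonneg]⟩
          _ < ε := hy
      have hDmem : D ∈ hat A ∩ hat B := hball (Metric.mem_ball'.2 (by rwa [dist_comm] at hdistD ⊢)) |> interior_subset
      exact ⟨hDmem.1 (Set.mem_insert y _), hDmem.2 (Set.mem_insert y _)⟩
    obtain ⟨y, hy⟩ : (Metric.ball x₁ ε).Nonempty := ⟨x₁, Metric.mem_ball_self hε⟩
    exact ⟨y, Metric.isOpen_ball.subset_interior_iff.2 hsub hy⟩
end
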